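/- arXiv:0804.3163 — 4 statements merged into one kernel-verified Lean document; each statement's English description precedes it below -/
import Mathlib

section
/- Let X be a nonempty compact Hausdorff space, let ν ∈ HX, let φ : X → ℝ be continuous, and let a, b, c ∈ ℝ with 0 ≤ a < c < b ≤ 1. Then p_{φ_(a,b)}(ν) = ((c-a)/(b-a))·p_{φ_(a,c)}(ν) + ((b-c)/(b-a))·p_{φ_(c,b)}(ν). -/
open Set MeasureTheory Topology Filter

noncomputable section

universe u

/-- The index set for the product of closed intervals: pairs consisting of a continuous
real-valued function on `X` and a subinterval `(a,b)` of `[0,1]` with `0 ≤ a < b ≤ 1`. -/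
abbrev HMIdx (X : Type u) [TopologicalSpace X] : Type u :=
  C(X, ℝ) × {p : ℝ × ℝ // 0 ≤ p.1 ∧ p.1 < p.2 ∧ p.2 ≤ 1}

/-- `α : ℝ → X` is a step function (on `[0,1)`): there is a partition
`0 = t₀ < t₁ < ⋯ < tₙ = 1` such that `α` is constant on each `[tᵢ, tᵢ₊₁)`. -/
def IsStepFun {X : Type u} (α : ℝ → X) : Prop :=
  ∃ (n : ℕ) (t : Fin (n + 1) → ℝ), t 0 = 0 ∧ t (Fin.last n) = 1 ∧ StrictMono t ∧
    ∀ i : Fin n, ∀ s ∈ Set.Ico (t i.castSucc) (t i.succ), α s = α (t i.castSucc)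

/-- The embedding of step functions into the product, whose `(φ,(a,b))`-th coordinate is
`(b-a)⁻¹ ∫_a^b φ(α(s)) ds`. -/
def hmEmbed {X : Type u} [TopologicalSpace X] (α : ℝ → X) : HMIdx X → ℝ :=
  fun p => (p.2.1.2 - p.2.1.1)⁻¹ * ∫ s in p.2.1.1..p.2.1.2, p.1 (α s)

/-- `HX`, realized as the closure of the image of the set of step functions in the product. -/
def HSet (X : Type u) [TopologicalSpace X] : Set (HMIdx X → ℝ) :=
  closure (hmEmbed '' {α : ℝ → X | IsStepFun α})

/-- The coordinate-wise description of the map `Hf` on the ambient product: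
`p_{φ_(a,b)} ∘ Hf = p_{(φ∘f)_(a,b)}`. -/
def Hmap {X Y : Type u} [TopologicalSpace X] [TopologicalSpace Y] (f : C(X, Y)) :
    (HMIdx X → ℝ) → HMIdx Y → ℝ :=
  fun ν p => ν ⟨p.1.comp f, p.2⟩

theorem Hmap_mapsTo {X Y : Type u} [TopologicalSpace X] [TopologicalSpace Y] (f : C(X, Y)) :
    Set.MapsTo (Hmap f) (HSet X) (HSet Y) := by
  intro ν hν
  have hc : Continuous (Hmap f) := continuous_pi fun p => continuous_apply _
  have hsub : Hmap f '' (hmEmbed '' {α : ℝ → X | IsStepFun α}) ⊆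
      hmEmbed '' {α : ℝ → Y | IsStepFun α} := by
    rintro _ ⟨_, ⟨α, hα, rfl⟩, rfl⟩
    refine ⟨f ∘ α, ?_, rfl⟩
    obtain ⟨n, t, h0, h1, hm, hstep⟩ := hα
    exact ⟨n, t, h0, h1, hm, fun i s hs => congrArg f (hstep i s hs)⟩
  have h1 : Hmap f ν ∈ closure (Hmap f '' (hmEmbed '' {α : ℝ → X | IsStepFun α})) :=
    image_closure_subset_closure_image hc ⟨ν, hν, rfl⟩
  exact closure_mono hsub h1

/-- The map `Hf : HX → HY` induced by `f : X → Y`. -/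
def HfSub {X Y : Type u} [TopologicalSpace X] [TopologicalSpace Y] (f : C(X, Y)) :
    ↥(HSet X) → ↥(HSet Y) :=
  Set.MapsTo.restrict (Hmap f) (HSet X) (HSet Y) (Hmap_mapsTo f)

/-- The Hartman–Mycielski "concatenation" map `e : HX × HX × I → HX`, described
coordinatewise on the ambient product. -/
def emap {X : Type u} [TopologicalSpace X] (μ ν : HMIdx X → ℝ) (t : ℝ) : HMIdx X → ℝ :=
  fun p =>
    if hb : p.2.1.2 ≤ t then μ p
    else if ha : t ≤ p.2.1.1 then ν p
    else
      ((t - p.2.1.1) * μ ⟨p.1, ⟨(p.2.1.1, t), p.2.2.1, not_le.mp ha,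
          (not_le.mp hb).le.trans p.2.2.2.2⟩⟩ +
        (p.2.1.2 - t) * ν ⟨p.1, ⟨(t, p.2.1.2), p.2.2.1.trans (not_le.mp ha).le,
          not_le.mp hb, p.2.2.2.2⟩⟩) / (p.2.1.2 - p.2.1.1)

/-- A subset `A ⊆ HX` is `e`-convex if it is closed under the maps `e(·,·,t)`, `t ∈ [0,1]`. -/
def EConvex {X : Type u} [TopologicalSpace X] (A : Set (HMIdx X → ℝ)) : Prop :=
  ∀ α ∈ A, ∀ β ∈ A, ∀ t ∈ Set.Icc (0 : ℝ) 1, emap α β t ∈ A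

/-- A subset of `HX` is `H`-convex if it is `e`-convex and convex. -/
def HConvexSet {X : Type u} [TopologicalSpace X] (A : Set (HMIdx X → ℝ)) : Prop :=
  EConvex A ∧ Convex ℝ A

/-- The point `δ(x) ∈ HX`: all coordinates `p_{φ_(a,b)}` equal `φ(x)`. -/
def deltaH {X : Type u} [TopologicalSpace X] (x : X) : HMIdx X → ℝ := fun p => p.1 x

theorem isStepFun_const {X : Type u} (x : X) : IsStepFun (fun _ : ℝ => x) := by
  refine ⟨1, ![0, 1], by simp, by simp [Fin.last], ?_, fun i s _ => rfl⟩
  intro a b hab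
  fin_cases a <;> fin_cases b <;> simp_all

theorem hmEmbed_const {X : Type u} [TopologicalSpace X] (x : X) :
    hmEmbed (fun _ : ℝ => x) = deltaH x := by
  funext p
  obtain ⟨φ, ⟨⟨a, b⟩, ha, hab, hb⟩⟩ := p
  simp only [hmEmbed, deltaH, intervalIntegral.integral_const, smul_eq_mul]
  exact inv_mul_cancel_left₀ (sub_ne_zero.2 hab.ne') _

theorem deltaH_mem {X : Type u} [TopologicalSpace X] (x : X) : deltaH x ∈ HSet X := by
  rw [← hmEmbed_const]
  exact subset_closure ⟨_, isStepFun_const x, rfl⟩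

/-- The natural inclusion `iX : P(X) → HX` (described on the ambient product):
`p_{φ_(a,b)}(iX(μ)) = ∫ φ dμ`. -/
def imapP {X : Type u} [TopologicalSpace X] [MeasurableSpace X]
    (μ : ProbabilityMeasure X) : HMIdx X → ℝ :=
  fun p => ∫ x, p.1 x ∂(μ : Measure X)

theorem stepFun_intervalIntegrable {X : Type u} [TopologicalSpace X]
    {α : ℝ → X} (hα : IsStepFun α) (φ : C(X, ℝ)) {u v : ℝ} (hu : 0 ≤ u) (huv : u ≤ v)
    (hv : v ≤ 1) : IntervalIntegrable (fun s => φ (α s)) volume u v := by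
  obtain ⟨n, t, h0, h1, hm, hstep⟩ := hα
  have key : ∀ k : Fin (n + 1), IntervalIntegrable (fun s => φ (α s)) volume (t 0) (t k) := by
    intro k
    induction k using Fin.induction with
    | zero => simp
    | succ i ih =>
      refine ih.trans ?_
      have hle : t i.castSucc ≤ t i.succ := (hm (Fin.castSucc_lt_succ (i := i))).le
      have h1 : IntegrableOn (fun s => φ (α s)) (Set.Ico (t i.castSucc) (t i.succ)) volume := by
        refine ((integrableOn_const (C := φ (α (t i.castSucc))) measure_Ico_lt_top.ne)).congr_fun
          (fun s hs => ?_) measurableSet_Ico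
        exact (congrArg φ (hstep i s hs)).symm
      have h2 : IntegrableOn (fun s => φ (α s)) (Set.Ioc (t i.castSucc) (t i.succ)) volume :=
        h1.congr_set_ae Ico_ae_eq_Ioc.symm
      exact (intervalIntegrable_iff_integrableOn_Ioc_of_le hle).2 h2
  have h01 : IntervalIntegrable (fun s => φ (α s)) volume 0 1 := by
    have := key (Fin.last n); rwa [h0, h1] at this
  exact h01.mono_set (Set.uIcc_subset_uIcc
    (by rw [Set.uIcc_of_le zero_le_one]; exact ⟨hu, le_trans huv hv⟩)
    (by rw [Set.uIcc_of_le zero_le_one]; exact ⟨le_trans hu huv, hv⟩))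

theorem statement4 (X : Type u) [TopologicalSpace X] [CompactSpace X] [T2Space X] [Nonempty X]
    (ν : HMIdx X → ℝ) (hν : ν ∈ HSet X) (φ : C(X, ℝ)) (a b c : ℝ)
    (ha : 0 ≤ a) (hac : a < c) (hcb : c < b) (hb : b ≤ 1) :
    ν ⟨φ, ⟨(a, b), ha, hac.trans hcb, hb⟩⟩ =
      ((c - a) / (b - a)) * ν ⟨φ, ⟨(a, c), ha, hac, hcb.le.trans hb⟩⟩ +
      ((b - c) / (b - a)) * ν ⟨φ, ⟨(c, b), ha.trans hac.le, hcb, hb⟩⟩ := by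
  set S : Set (HMIdx X → ℝ) :=
    {ν : HMIdx X → ℝ | ν ⟨φ, ⟨(a, b), ha, hac.trans hcb, hb⟩⟩ =
      ((c - a) / (b - a)) * ν ⟨φ, ⟨(a, c), ha, hac, hcb.le.trans hb⟩⟩ +
      ((b - c) / (b - a)) * ν ⟨φ, ⟨(c, b), ha.trans hac.le, hcb, hb⟩⟩} with hSdef
  have hsub : hmEmbed '' {α : ℝ → X | IsStepFun α} ⊆ S := by
    rintro _ ⟨α, hα, rfl⟩
    simp only [hSdef, Set.mem_setOf_eq, hmEmbed]
    have Iac := stepFun_intervalIntegrable hα φ ha hac.le (hcb.le.trans hb)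
    have Icb := stepFun_intervalIntegrable hα φ (ha.trans hac.le) hcb.le hb
    rw [← intervalIntegral.integral_add_adjacent_intervals Iac Icb]
    have hba : b - a ≠ 0 := sub_ne_zero.2 (hac.trans hcb).ne'
    have hca : c - a ≠ 0 := sub_ne_zero.2 hac.ne'
    have hbc : b - c ≠ 0 := sub_ne_zero.2 hcb.ne'
    field_simp
  have hclosed : IsClosed S := by
    refine isClosed_eq (continuous_apply _) ?_
    exact (continuous_const.mul (continuous_apply _)).add (continuous_const.mul (continuous_apply _))
  exact closure_minimal hsub hclosed hν

end
end

section
/- Let X be a nonempty compact Hausdorff space, let A be a closed H-convex subset of HX, and let ν ∈ HX with ν ∉ A. Then there exist a continuous function φ : X → ℝ and reals 0 < a < b < 1 such that p_{φ_(a,b)}(ν) < p_{φ_(a,b)}(μ) for every μ ∈ A. -/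
open Set MeasureTheory Topology Filter

noncomputable section

universe u

-- ======== auxiliary lemmas ========
section Aux

theorem clm_pi_repr {I : Type*} [DecidableEq I] (f : ((I → ℝ) →L[ℝ] ℝ)) :
    ∃ s : Finset I, ∀ x : I → ℝ, f x = ∑ i ∈ s, x i * f (Pi.single i 1) := by
  have hU : f ⁻¹' Metric.ball (0:ℝ) 1 ∈ 𝓝 (0 : I → ℝ) := by
    have := f.continuous.continuousAt (x := 0)
    apply this.preimage_mem_nhds
    simp [Metric.ball_mem_nhds]
  rw [nhds_pi] at hU
  obtain ⟨I', hI'fin, t, ht, hsub⟩ := Filter.mem_pi.1 hU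
  refine ⟨hI'fin.toFinset, fun x => ?_⟩
  classical
  set e : I → (I → ℝ) := fun i => Pi.single i 1 with he
  have hzero : ∀ z : I → ℝ, (∀ i ∈ I', z i = 0) → f z = 0 := by
    intro z hz
    by_contra hfz
    have key : ∀ c : ℝ, |c| * |f z| < 1 := by
      intro c
      have hmem : c • z ∈ I'.pi t := by
        intro i hi
        have : (c • z) i = 0 := by simp [hz i hi]
        rw [this]
        exact mem_of_mem_nhds (ht i)
      have := hsub hmem
      simpa [Real.dist_eq, abs_mul] using this
    have h2 := key (2 / |f z|)
    have habs : |f z| > 0 := abs_pos.2 hfz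
    rw [abs_div, abs_abs] at h2
    rw [div_mul_cancel₀] at h2
    · norm_num at h2
    · exact ne_of_gt habs
  have hy : f (x - ∑ i ∈ hI'fin.toFinset, x i • e i) = 0 := by
    apply hzero
    intro i hi
    have hi' : i ∈ hI'fin.toFinset := hI'fin.mem_toFinset.2 hi
    simp only [Pi.sub_apply, Finset.sum_apply, Pi.smul_apply, smul_eq_mul]
    rw [Finset.sum_eq_single i]
    · simp [he]
    · intro j _ hj
      simp [he, Pi.single_apply, hj]
    · intro h; exact absurd hi' h
  have hx : x = (∑ i ∈ hI'fin.toFinset, x i • e i) +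
      (x - ∑ i ∈ hI'fin.toFinset, x i • e i) := by ring
  calc f x = f ((∑ i ∈ hI'fin.toFinset, x i • e i) +
      (x - ∑ i ∈ hI'fin.toFinset, x i • e i)) := by rw [← hx]
    _ = ∑ i ∈ hI'fin.toFinset, x i * f (e i) := by
        rw [map_add, hy, add_zero, map_sum]
        simp [_root_.map_smul]

theorem stepFun_integrable {X : Type u} [TopologicalSpace X]
    {α : ℝ → X} (hα : IsStepFun α) (φ : C(X, ℝ)) {a b : ℝ}
    (h0 : 0 ≤ a) (hab : a ≤ b) (hb1 : b ≤ 1) :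
    IntervalIntegrable (fun s => φ (α s)) volume a b := by
  classical
  obtain ⟨n, t, ht0, ht1, hmono, hstep⟩ := hα
  set g : ℝ → ℝ := fun s => ∑ i : Fin n,
    (Set.Ico (t i.castSucc) (t i.succ)).indicator (fun _ => φ (α (t i.castSucc))) s with hg
  have hEq : ∀ s ∈ Set.Ico (0:ℝ) 1, φ (α s) = g s := by
    intro s hs
    obtain ⟨hs0, hs1⟩ := hs
    set T : Finset (Fin (n+1)) := Finset.univ.filter (fun i => t i ≤ s) with hT
    have hTne : T.Nonempty := ⟨0, by simp [hT, ht0, hs0]⟩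
    set i₀ := T.max' hTne with hi₀
    have hi₀mem : t i₀ ≤ s := by
      have := T.max'_mem hTne
      simpa [hT] using this
    have hi₀ne : i₀ ≠ Fin.last n := by
      intro h
      rw [h, ht1] at hi₀mem
      linarith
    obtain ⟨j, hj⟩ : ∃ j : Fin n, i₀ = j.castSucc := ⟨i₀.castPred hi₀ne, by simp⟩
    have hjs : s < t j.succ := by
      by_contra hcon
      push_neg at hcon
      have hmem : j.succ ∈ T := by simp [hT, hcon]
      have := T.le_max' _ hmem
      rw [← hi₀, hj] at this
      exact absurd this (not_le.2 (Fin.castSucc_lt_succ : j.castSucc < j.succ))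
    have hαs : α s = α (t j.castSucc) := hstep j s ⟨hj ▸ hi₀mem, hjs⟩
    rw [hαs, hg]
    dsimp only
    rw [Finset.sum_eq_single j]
    · rw [Set.indicator_of_mem (show s ∈ Set.Ico (t j.castSucc) (t j.succ) from ⟨hj ▸ hi₀mem, hjs⟩)]
    · intro i _ hij
      apply Set.indicator_of_notMem
      rcases lt_or_gt_of_ne hij with h | h
      · intro hmem
        have : t i.succ ≤ t j.castSucc := hmono.monotone (by
          rw [Fin.le_def]
          simp only [Fin.val_succ, Fin.coe_castSucc]
          have := Fin.lt_def.1 h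
          omega)
        have := lt_of_lt_of_le hmem.2 (le_trans this (hj ▸ hi₀mem))
        exact absurd this (lt_irrefl s)
      · intro hmem
        have : t j.succ ≤ t i.castSucc := hmono.monotone (by
          rw [Fin.le_def]
          simp only [Fin.val_succ, Fin.coe_castSucc]
          have := Fin.lt_def.1 h
          omega)
        linarith [hmem.1]
    · intro h; exact absurd (Finset.mem_univ j) h
  have hgmeas : Measurable g := by
    apply Finset.measurable_sum
    intro i _
    exact Measurable.indicator measurable_const measurableSet_Ico
  rw [intervalIntegrable_iff, uIoc_of_le hab]
  have hgint : IntegrableOn g (Set.Ioc a b) volume := by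
    apply integrable_finset_sum
    intro i _
    apply MeasureTheory.Integrable.indicator _ measurableSet_Ico
    exact integrableOn_const (by rw [Real.volume_Ioc]; exact ENNReal.ofReal_ne_top)
  apply hgint.congr
  have h1 : ∀ᵐ s ∂(volume.restrict (Set.Ioc a b)), s ≠ 1 := by
    rw [ae_iff]
    apply measure_mono_null (fun s hs => ?_) (by simp : volume.restrict (Set.Ioc a b) {(1:ℝ)} = 0)
    · simp only [Set.mem_setOf_eq, not_not] at hs
      simp [hs]
  filter_upwards [ae_restrict_mem measurableSet_Ioc, h1] with s hs hs1
  exact (hEq s ⟨le_trans h0 hs.1.le, lt_of_le_of_ne (hs.2.trans hb1) hs1⟩).symm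

end Aux

section Rel

variable {X : Type u} [TopologicalSpace X] [CompactSpace X]

/-- Total version of the index constructor. -/
def idx (φ : C(X, ℝ)) (a b : ℝ) : HMIdx X :=
  if h : 0 ≤ a ∧ a < b ∧ b ≤ 1 then ⟨φ, ⟨(a, b), h⟩⟩ else ⟨φ, ⟨(0, 1), by norm_num⟩⟩

theorem idx_eq (φ : C(X, ℝ)) {a b : ℝ} (h : 0 ≤ a ∧ a < b ∧ b ≤ 1) :
    idx φ a b = ⟨φ, ⟨(a, b), h⟩⟩ := dif_pos h

theorem hset_closure {R : Set ((HMIdx X → ℝ))}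
    (hR : IsClosed R) (hstep : ∀ α : ℝ → X, IsStepFun α → hmEmbed α ∈ R) :
    HSet X ⊆ R :=
  closure_minimal (by rintro _ ⟨α, hα, rfl⟩; exact hstep α hα) hR

theorem hmEmbed_idx (α : ℝ → X) (φ : C(X, ℝ)) {a b : ℝ} (h : 0 ≤ a ∧ a < b ∧ b ≤ 1) :
    hmEmbed α (idx φ a b) = (b - a)⁻¹ * ∫ s in a..b, φ (α s) := by
  rw [idx_eq _ h]; rfl

theorem hset_smul {μ : HMIdx X → ℝ} (hμ : μ ∈ HSet X) (r : ℝ) (φ : C(X, ℝ)) {a b : ℝ}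
    (h : 0 ≤ a ∧ a < b ∧ b ≤ 1) :
    μ (idx (r • φ) a b) = r * μ (idx φ a b) := by
  refine hset_closure (isClosed_eq (continuous_apply _)
    (continuous_const.mul (continuous_apply _))) (fun α hα => ?_) hμ
  show hmEmbed α (idx (r • φ) a b) = r * hmEmbed α (idx φ a b)
  rw [hmEmbed_idx _ _ h, hmEmbed_idx _ _ h]
  have : ∀ s : ℝ, (r • φ) (α s) = r * φ (α s) := fun s => rfl
  simp only [this]
  rw [intervalIntegral.integral_const_mul]
  ring

theorem hset_zero {μ : HMIdx X → ℝ} (hμ : μ ∈ HSet X) {a b : ℝ}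
    (h : 0 ≤ a ∧ a < b ∧ b ≤ 1) :
    μ (idx 0 a b) = 0 := by
  have := hset_smul hμ 0 0 h
  rwa [zero_smul, zero_mul] at this

theorem hset_add {μ : HMIdx X → ℝ} (hμ : μ ∈ HSet X) (φ ψ : C(X, ℝ)) {a b : ℝ}
    (h : 0 ≤ a ∧ a < b ∧ b ≤ 1) :
    μ (idx (φ + ψ) a b) = μ (idx φ a b) + μ (idx ψ a b) := by
  refine hset_closure (isClosed_eq (continuous_apply _)
    ((continuous_apply _).add (continuous_apply _))) (fun α hα => ?_) hμ
  show hmEmbed α (idx (φ + ψ) a b) = hmEmbed α (idx φ a b) + hmEmbed α (idx ψ a b)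
  rw [hmEmbed_idx _ _ h, hmEmbed_idx _ _ h, hmEmbed_idx _ _ h]
  have : ∀ s : ℝ, (φ + ψ) (α s) = φ (α s) + ψ (α s) := fun s => rfl
  simp only [this]
  rw [intervalIntegral.integral_add (stepFun_integrable hα φ h.1 h.2.1.le h.2.2)
    (stepFun_integrable hα ψ h.1 h.2.1.le h.2.2)]
  ring

theorem hset_split {μ : HMIdx X → ℝ} (hμ : μ ∈ HSet X) (φ : C(X, ℝ)) {a c b : ℝ}
    (h0 : 0 ≤ a) (hac : a < c) (hcb : c < b) (hb1 : b ≤ 1) :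
    (b - a) * μ (idx φ a b) = (c - a) * μ (idx φ a c) + (b - c) * μ (idx φ c b) := by
  refine hset_closure (isClosed_eq (continuous_const.mul (continuous_apply _))
    ((continuous_const.mul (continuous_apply _)).add
      (continuous_const.mul (continuous_apply _)))) (fun α hα => ?_) hμ
  show (b - a) * hmEmbed α (idx φ a b) =
    (c - a) * hmEmbed α (idx φ a c) + (b - c) * hmEmbed α (idx φ c b)
  rw [hmEmbed_idx _ _ ⟨h0, hac.trans hcb, hb1⟩, hmEmbed_idx _ _ ⟨h0, hac, hcb.le.trans hb1⟩,
    hmEmbed_idx _ _ ⟨h0.trans hac.le, hcb, hb1⟩]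
  have hint := intervalIntegral.integral_add_adjacent_intervals
    (stepFun_integrable hα φ h0 hac.le (hcb.le.trans hb1))
    (stepFun_integrable hα φ (h0.trans hac.le) hcb.le hb1)
  rw [mul_inv_cancel_left₀ (sub_ne_zero.2 (hac.trans hcb).ne'),
    mul_inv_cancel_left₀ (sub_ne_zero.2 hac.ne'),
    mul_inv_cancel_left₀ (sub_ne_zero.2 hcb.ne')]
  exact hint.symm

theorem hset_bound {μ : HMIdx X → ℝ} (hμ : μ ∈ HSet X) (φ : C(X, ℝ)) {a b : ℝ}
    (h : 0 ≤ a ∧ a < b ∧ b ≤ 1) :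
    |μ (idx φ a b)| ≤ ‖φ‖ := by
  refine hset_closure (isClosed_le (continuous_apply _).abs continuous_const)
    (fun α hα => ?_) hμ
  show |hmEmbed α (idx φ a b)| ≤ ‖φ‖
  rw [hmEmbed_idx _ _ h]
  have hnorm : ‖∫ s in a..b, φ (α s)‖ ≤ ‖φ‖ * |b - a| :=
    intervalIntegral.norm_integral_le_of_norm_le_const
      (fun s _ => φ.norm_coe_le_norm (α s))
  rw [Real.norm_eq_abs] at hnorm
  have hba : (0:ℝ) < b - a := sub_pos.2 h.2.1
  rw [abs_mul, abs_inv, abs_of_pos hba]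
  rw [abs_of_pos hba] at hnorm
  calc (b - a)⁻¹ * |∫ s in a..b, φ (α s)| ≤ (b - a)⁻¹ * (‖φ‖ * (b - a)) := by
        apply mul_le_mul_of_nonneg_left hnorm (inv_nonneg.2 hba.le)
    _ = ‖φ‖ := by field_simp

theorem hset_sum_smul {X : Type u} [TopologicalSpace X] [CompactSpace X]
    {μ : HMIdx X → ℝ} (hμ : μ ∈ HSet X) {ι : Type*} (s : Finset ι)
    (w : ι → ℝ) (φs : ι → C(X, ℝ)) {a b : ℝ} (h : 0 ≤ a ∧ a < b ∧ b ≤ 1) :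
    μ (idx (∑ i ∈ s, w i • φs i) a b) = ∑ i ∈ s, w i * μ (idx (φs i) a b) := by
  classical
  induction s using Finset.induction with
  | empty => simpa using hset_zero hμ h
  | insert _ _ hni ih =>
      rw [Finset.sum_insert hni, Finset.sum_insert hni, hset_add hμ _ _ h,
        hset_smul hμ _ _ h, ih]

theorem hset_refine {X : Type u} [TopologicalSpace X] [CompactSpace X]
    {μ : HMIdx X → ℝ} (hμ : μ ∈ HSet X) (φ : C(X, ℝ)) {m : ℕ} (t : ℕ → ℝ)
    (hmono : ∀ i j, i < j → j ≤ m → t i < t j) (ht0 : t 0 = 0) (ht1 : t m = 1) :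
    ∀ l ≤ m, ∀ k, k < l →
      (t l - t k) * μ (idx φ (t k) (t l)) =
        ∑ j ∈ Finset.Ico k l, (t (j+1) - t j) * μ (idx φ (t j) (t (j+1))) := by
  have hle : ∀ i j, i ≤ j → j ≤ m → t i ≤ t j := by
    intro i j hij hjm
    rcases eq_or_lt_of_le hij with rfl | hlt
    · exact le_refl _
    · exact (hmono i j hlt hjm).le
  intro l hlm k hkl
  induction l, hkl using Nat.le_induction with
  | base =>
      rw [Nat.Ico_succ_singleton, Finset.sum_singleton]
  | succ l hl ih =>
      have hsp := hset_split hμ φ (a := t k) (c := t l) (b := t (l+1))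
        (by rw [← ht0]; exact hle 0 k (Nat.zero_le _) (by omega))
        (hmono k l (by omega) (by omega))
        (hmono l (l+1) (by omega) hlm)
        (by rw [← ht1]; exact hle (l+1) m hlm le_rfl)
      rw [hsp, ih (by omega), Finset.sum_Ico_succ_top (by omega : k ≤ l)]

def glue {X : Type u} [TopologicalSpace X] (μs : ℕ → (HMIdx X → ℝ)) (t : ℕ → ℝ) :
    ℕ → (HMIdx X → ℝ)
  | 0 => μs 0
  | (k+1) => emap (glue μs t k) (μs (k+1)) (t (k+1))

theorem glue_mem {X : Type u} [TopologicalSpace X] {A : Set (HMIdx X → ℝ)} (hE : EConvex A)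
    (μs : ℕ → (HMIdx X → ℝ)) (t : ℕ → ℝ) {m : ℕ}
    (hμs : ∀ j, j < m → μs j ∈ A) (htI : ∀ j, j ≤ m → t j ∈ Set.Icc (0:ℝ) 1) :
    ∀ k, k < m → glue μs t k ∈ A := by
  intro k
  induction k with
  | zero => intro h; exact hμs 0 h
  | succ k ih =>
      intro h
      exact hE _ (ih (by omega)) _ (hμs _ h) _ (htI (k+1) (by omega))

theorem glue_coord {X : Type u} [TopologicalSpace X] (μs : ℕ → (HMIdx X → ℝ)) (t : ℕ → ℝ)
    {m : ℕ} (hle : ∀ i j, i ≤ j → j ≤ m → t i ≤ t j) :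
    ∀ k, k < m → ∀ j, j ≤ k → ∀ p : HMIdx X, t j ≤ p.2.1.1 → p.2.1.2 ≤ t (j+1) →
      glue μs t k p = μs j p := by
  intro k
  induction k with
  | zero =>
      intro _ j hj p h1 h2
      obtain rfl : j = 0 := Nat.le_zero.1 hj
      rfl
  | succ k ih =>
      intro hk j hj p h1 h2
      show emap (glue μs t k) (μs (k+1)) (t (k+1)) p = μs j p
      rcases Nat.lt_or_ge j (k+1) with hjk | hjk
      · have hb : p.2.1.2 ≤ t (k+1) := le_trans h2 (hle (j+1) (k+1) (by omega) (by omega))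
        simp only [emap]
        rw [dif_pos hb]
        exact ih (by omega) j (by omega) p h1 h2
      · obtain rfl : j = k+1 := by omega
        have hab := p.2.2.2.1
        have hb : ¬ p.2.1.2 ≤ t (k+1) := by push_neg; linarith
        simp only [emap]
        rw [dif_neg hb, dif_pos h1]

set_option maxHeartbeats 1000000 in
theorem statement6 (X : Type u) [TopologicalSpace X] [CompactSpace X] [T2Space X] [Nonempty X]
    (A : Set (HMIdx X → ℝ)) (hA : A ⊆ HSet X) (hcl : IsClosed A) (hconv : HConvexSet A)
    (ν : HMIdx X → ℝ) (hν : ν ∈ HSet X) (hνA : ν ∉ A) :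
    ∃ (φ : C(X, ℝ)) (a b : ℝ) (ha : 0 < a) (hab : a < b) (hb : b < 1),
      ∀ μ ∈ A, ν ⟨φ, ⟨(a, b), ha.le, hab, hb.le⟩⟩ < μ ⟨φ, ⟨(a, b), ha.le, hab, hb.le⟩⟩ := by
  classical
  rcases Set.eq_empty_or_nonempty A with rfl | hAne
  · exact ⟨0, 1/3, 1/2, by norm_num, by norm_num, by norm_num,
      fun μ hμ => absurd hμ (by simp)⟩
  obtain ⟨f, u, hfu, hsep⟩ := geometric_hahn_banach_point_closed hconv.2 hcl hνA
  obtain ⟨S, hf⟩ := clm_pi_repr f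
  set c : HMIdx X → ℝ := fun p => f (Pi.single p 1) with hc
  -- the endpoint set and its sorted enumeration
  set E : Finset ℝ :=
    insert 0 (insert 1 ((S.image fun p => p.2.1.1) ∪ (S.image fun p => p.2.1.2))) with hE
  have h0E : (0:ℝ) ∈ E := Finset.mem_insert_self _ _
  have h1E : (1:ℝ) ∈ E := Finset.mem_insert_of_mem (Finset.mem_insert_self _ _)
  have hEicc : ∀ x ∈ E, 0 ≤ x ∧ x ≤ 1 := by
    intro x hx
    simp only [hE, Finset.mem_insert, Finset.mem_union, Finset.mem_image] at hx
    rcases hx with rfl | rfl | ⟨p, hp, rfl⟩ | ⟨p, hp, rfl⟩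
    · norm_num
    · norm_num
    · exact ⟨p.2.2.1, p.2.2.2.1.le.trans p.2.2.2.2⟩
    · exact ⟨p.2.2.1.trans p.2.2.2.1.le, p.2.2.2.2⟩
  set L := E.sort (· ≤ ·) with hL
  set m := E.card - 1 with hm
  have hLlen : L.length = m + 1 := by
    rw [hL, Finset.length_sort, hm]
    have : 2 ≤ E.card := Finset.one_lt_card.2 ⟨0, h0E, 1, h1E, by norm_num⟩
    omega
  set t : ℕ → ℝ := fun j => L.getD j 1 with ht
  have htget : ∀ j, ∀ _hj : j ≤ m, t j = L[j]'(by omega) :=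
    fun j h => List.getD_eq_getElem L 1 (by omega)
  have htmem : ∀ j, j ≤ m → t j ∈ E := by
    intro j hj
    rw [htget j hj, ← Finset.mem_sort (α := ℝ) (· ≤ ·), ← hL]
    exact List.getElem_mem _
  have hmono : ∀ i j, i < j → j ≤ m → t i < t j := by
    intro i j hij hj
    rw [htget i (by omega), htget j hj]
    exact List.Pairwise.rel_get_of_lt (hL ▸ (Finset.sortedLT_sort E).pairwise)
      (a := ⟨i, by omega⟩) (b := ⟨j, by omega⟩) hij
  have hle : ∀ i j, i ≤ j → j ≤ m → t i ≤ t j := by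
    intro i j hij hj
    rcases eq_or_lt_of_le hij with rfl | h
    · exact le_refl _
    · exact (hmono i j h hj).le
  have hsurj : ∀ x ∈ E, ∃ j, j ≤ m ∧ t j = x := by
    intro x hx
    rw [← Finset.mem_sort (α := ℝ) (· ≤ ·), ← hL] at hx
    obtain ⟨n, hn, hx⟩ := List.mem_iff_getElem.1 hx
    exact ⟨n, by omega, by rw [htget n (by omega)]; exact hx⟩
  have ht0 : t 0 = 0 := by
    obtain ⟨j, hj, hjt⟩ := hsurj 0 h0E
    have h1 : t 0 ≤ t j := hle 0 j (Nat.zero_le _) hj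
    have h2 : 0 ≤ t 0 := (hEicc _ (htmem 0 (Nat.zero_le _))).1
    linarith [hjt ▸ h1]
  have ht1 : t m = 1 := by
    obtain ⟨j, hj, hjt⟩ := hsurj 1 h1E
    have h1 : t j ≤ t m := hle j m hj le_rfl
    have h2 : t m ≤ 1 := (hEicc _ (htmem m le_rfl)).2
    linarith [hjt ▸ h1]
  have hm1 : 1 ≤ m := by
    by_contra h
    have : m = 0 := by omega
    rw [this] at ht1
    rw [ht1] at ht0
    norm_num at ht0
  have hIj : ∀ j, j < m → 0 ≤ t j ∧ t j < t (j+1) ∧ t (j+1) ≤ 1 := fun j hj =>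
    ⟨ht0 ▸ hle 0 j (Nat.zero_le _) (by omega), hmono j (j+1) (by omega) (by omega),
      ht1 ▸ hle (j+1) m (by omega) le_rfl⟩
  -- the weights and the localized functions
  set W : HMIdx X → ℕ → ℝ := fun p j =>
    if p.2.1.1 ≤ t j ∧ t (j+1) ≤ p.2.1.2 then
      c p * (t (j+1) - t j) / (p.2.1.2 - p.2.1.1) else 0 with hW
  set ψ : ℕ → C(X, ℝ) := fun j => ∑ p ∈ S, W p j • p.1 with hψ
  -- the key rewriting of the functional
  have hkey : ∀ μ ∈ HSet X,
      f μ = ∑ j ∈ Finset.range m, μ (idx (ψ j) (t j) (t (j+1))) := by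
    intro μ hμ
    have hper : ∀ p ∈ S,
        μ p * c p = ∑ j ∈ Finset.range m, W p j * μ (idx p.1 (t j) (t (j+1))) := by
      intro p hp
      have haE : p.2.1.1 ∈ E := by
        simp only [hE, Finset.mem_insert, Finset.mem_union, Finset.mem_image]
        exact Or.inr (Or.inr (Or.inl ⟨p, hp, rfl⟩))
      have hbE : p.2.1.2 ∈ E := by
        simp only [hE, Finset.mem_insert, Finset.mem_union, Finset.mem_image]
        exact Or.inr (Or.inr (Or.inr ⟨p, hp, rfl⟩))
      obtain ⟨k, hk, hkt⟩ := hsurj _ haE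
      obtain ⟨l, hl, hlt⟩ := hsurj _ hbE
      have hpab := p.2.2.2.1
      have hkl : k < l := by
        by_contra hcon
        push_neg at hcon
        have := hle l k hcon hk
        rw [hkt, hlt] at this
        linarith
      have hab0 : p.2.1.2 - p.2.1.1 ≠ 0 := sub_ne_zero.2 hpab.ne'
      have href := hset_refine hμ p.1 t hmono ht0 ht1 l hl k hkl
      have hμp : μ p = μ (idx p.1 p.2.1.1 p.2.1.2) := by rw [idx_eq p.1 p.2.2]
      have hfilter : (Finset.range m).filter
          (fun j => p.2.1.1 ≤ t j ∧ t (j+1) ≤ p.2.1.2) = Finset.Ico k l := by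
        ext j
        simp only [Finset.mem_filter, Finset.mem_range, Finset.mem_Ico]
        constructor
        · rintro ⟨hjm, hc1, hc2⟩
          have h1 : k ≤ j := by
            by_contra hcon
            push_neg at hcon
            have := hmono j k hcon hk
            rw [hkt] at this
            linarith
          have h2 : j + 1 ≤ l := by
            by_contra hcon
            push_neg at hcon
            have := hmono l (j+1) (by omega) (by omega)
            rw [hlt] at this
            linarith
          omega
        · rintro ⟨hkj, hjl⟩
          refine ⟨by omega, ?_, ?_⟩
          · rw [← hkt]; exact hle k j hkj (by omega)
          · rw [← hlt]; exact hle (j+1) l (by omega) hl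
      symm
      calc ∑ j ∈ Finset.range m, W p j * μ (idx p.1 (t j) (t (j+1)))
          = ∑ j ∈ Finset.range m,
            (if p.2.1.1 ≤ t j ∧ t (j+1) ≤ p.2.1.2 then
              (c p * (t (j+1) - t j) / (p.2.1.2 - p.2.1.1)) *
                μ (idx p.1 (t j) (t (j+1))) else 0) := by
            apply Finset.sum_congr rfl
            intro j _
            rw [hW]
            dsimp only
            rw [ite_mul, zero_mul]
        _ = ∑ j ∈ Finset.Ico k l,
            (c p * (t (j+1) - t j) / (p.2.1.2 - p.2.1.1)) *
              μ (idx p.1 (t j) (t (j+1))) := by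
            rw [← hfilter, Finset.sum_filter]
        _ = c p * ((p.2.1.2 - p.2.1.1)⁻¹ *
              ∑ j ∈ Finset.Ico k l, (t (j+1) - t j) * μ (idx p.1 (t j) (t (j+1)))) := by
            rw [Finset.mul_sum, Finset.mul_sum]
            apply Finset.sum_congr rfl
            intro j _
            field_simp
        _ = c p * ((p.2.1.2 - p.2.1.1)⁻¹ *
              ((t l - t k) * μ (idx p.1 (t k) (t l)))) := by rw [href]
        _ = μ p * c p := by
            rw [hkt, hlt, inv_mul_cancel_left₀ hab0, hμp]
            ring
    calc f μ = ∑ p ∈ S, μ p * c p := hf μ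
      _ = ∑ p ∈ S, ∑ j ∈ Finset.range m, W p j * μ (idx p.1 (t j) (t (j+1))) :=
          Finset.sum_congr rfl hper
      _ = ∑ j ∈ Finset.range m, ∑ p ∈ S, W p j * μ (idx p.1 (t j) (t (j+1))) :=
          Finset.sum_comm
      _ = ∑ j ∈ Finset.range m, μ (idx (ψ j) (t j) (t (j+1))) := by
          apply Finset.sum_congr rfl
          intro j hj
          rw [hψ]
          exact (hset_sum_smul hμ S (fun p => W p j) (fun p => p.1)
            (hIj j (Finset.mem_range.1 hj))).symm
  -- a coordinate with a uniform gap
  have hγ : 0 < u - f ν := sub_pos.2 hfu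
  have hmR : (1:ℝ) ≤ (m:ℝ) := by exact_mod_cast hm1
  set ε := (u - f ν) / (2 * (m:ℝ)) with hε
  have hεpos : 0 < ε := div_pos hγ (by linarith)
  have hexists : ∃ j, j < m ∧ ∀ μ' ∈ A,
      ν (idx (ψ j) (t j) (t (j+1))) + ε ≤ μ' (idx (ψ j) (t j) (t (j+1))) := by
    by_contra hcon
    push_neg at hcon
    have hch : ∀ j, ∃ μ', (j < m → μ' ∈ A ∧
        μ' (idx (ψ j) (t j) (t (j+1))) < ν (idx (ψ j) (t j) (t (j+1))) + ε) := by
      intro j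
      by_cases hj : j < m
      · obtain ⟨μ', hμ'A, hμ'⟩ := hcon j hj
        exact ⟨μ', fun _ => ⟨hμ'A, hμ'⟩⟩
      · exact ⟨ν, fun h => absurd h hj⟩
    choose μs hμs using hch
    have hglueA : glue μs t (m-1) ∈ A :=
      glue_mem hconv.1 μs t (m := m) (fun j hj => (hμs j hj).1)
        (fun j hj => ⟨(hEicc _ (htmem j hj)).1, (hEicc _ (htmem j hj)).2⟩)
        (m-1) (by omega)
    have hglueH : glue μs t (m-1) ∈ HSet X := hA hglueA
    have hcoord : ∀ j, j < m →
        glue μs t (m-1) (idx (ψ j) (t j) (t (j+1))) = μs j (idx (ψ j) (t j) (t (j+1))) := by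
      intro j hj
      apply glue_coord μs t hle (m-1) (by omega) j (by omega)
      · rw [idx_eq _ (hIj j hj)]
      · rw [idx_eq _ (hIj j hj)]
    have hlt : f (glue μs t (m-1)) < u := by
      rw [hkey _ hglueH]
      have hsum : ∑ j ∈ Finset.range m, glue μs t (m-1) (idx (ψ j) (t j) (t (j+1))) <
          ∑ j ∈ Finset.range m, (ν (idx (ψ j) (t j) (t (j+1))) + ε) := by
        apply Finset.sum_lt_sum_of_nonempty (Finset.nonempty_range_iff.2 (by omega))
        intro j hj
        rw [hcoord j (Finset.mem_range.1 hj)]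
        exact (hμs j (Finset.mem_range.1 hj)).2
      have heq : ∑ j ∈ Finset.range m, (ν (idx (ψ j) (t j) (t (j+1))) + ε) =
          f ν + (m:ℝ) * ε := by
        rw [Finset.sum_add_distrib, Finset.sum_const, Finset.card_range, ← hkey ν hν,
          nsmul_eq_mul]
      have hmε : (m:ℝ) * ε = (u - f ν)/2 := by
        rw [hε]
        field_simp
      rw [heq, hmε] at hsum
      linarith
    exact absurd (hsep _ hglueA) (not_lt.2 hlt.le)
  -- shrink the interval away from the endpoints 0 and 1
  obtain ⟨j, hjm, hgap⟩ := hexists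
  obtain ⟨ha0, hab, hb1⟩ := hIj j hjm
  set a := t j with hadef
  set b := t (j+1) with hbdef
  set φ := ψ j with hφdef
  set M := ‖φ‖ with hMdef
  have hM0 : (0:ℝ) ≤ M := norm_nonneg _
  set δ := min ((b - a)/4) ((b - a) * ε / (8 * M + 1)) with hδ
  have hδpos : 0 < δ := lt_min (by linarith) (div_pos (mul_pos (by linarith) hεpos) (by positivity))
  have hδ4 : δ ≤ (b - a)/4 := min_le_left _ _
  have hδM : δ * (8 * M + 1) ≤ (b - a) * ε :=
    (le_div_iff₀ (by positivity)).1 (min_le_right _ _)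
  have h0cc : 0 < a + δ := by linarith
  have hccd : a + δ < b - δ := by linarith
  have hd1 : b - δ < 1 := by linarith
  refine ⟨φ, a + δ, b - δ, h0cc, hccd, hd1, ?_⟩
  intro μ hμ
  have hμH := hA hμ
  have hgapj : ν (idx φ a b) + ε ≤ μ (idx φ a b) := hgap μ hμ
  have hA1 := hset_split hμH φ (a := a) (c := a + δ) (b := b) ha0 (by linarith) (by linarith) hb1
  have hA2 := hset_split hμH φ (a := a + δ) (c := b - δ) (b := b)
    (by linarith) hccd (by linarith) hb1
  have hB1 := hset_split hν φ (a := a) (c := a + δ) (b := b) ha0 (by linarith) (by linarith) hb1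
  have hB2 := hset_split hν φ (a := a + δ) (c := b - δ) (b := b)
    (by linarith) hccd (by linarith) hb1
  have hbnd1 := abs_le.1 (hset_bound hμH φ (a := a) (b := a + δ)
    ⟨ha0, by linarith, by linarith⟩)
  have hbnd2 := abs_le.1 (hset_bound hμH φ (a := b - δ) (b := b)
    ⟨by linarith, by linarith, hb1⟩)
  have hbnd3 := abs_le.1 (hset_bound hν φ (a := a) (b := a + δ)
    ⟨ha0, by linarith, by linarith⟩)
  have hbnd4 := abs_le.1 (hset_bound hν φ (a := b - δ) (b := b)
    ⟨by linarith, by linarith, hb1⟩)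
  have e0 : (b - a) * (ν (idx φ a b) + ε) ≤ (b - a) * μ (idx φ a b) :=
    mul_le_mul_of_nonneg_left hgapj (by linarith)
  have e1 : δ * μ (idx φ a (a + δ)) ≤ δ * M := mul_le_mul_of_nonneg_left hbnd1.2 hδpos.le
  have e2 : δ * (-M) ≤ δ * ν (idx φ a (a + δ)) := mul_le_mul_of_nonneg_left hbnd3.1 hδpos.le
  have e3 : δ * μ (idx φ (b - δ) b) ≤ δ * M := mul_le_mul_of_nonneg_left hbnd2.2 hδpos.le
  have e4 : δ * (-M) ≤ δ * ν (idx φ (b - δ) b) := mul_le_mul_of_nonneg_left hbnd4.1 hδpos.le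
  have e5 : (0:ℝ) ≤ δ * M := mul_nonneg hδpos.le hM0
  have hdc : (0:ℝ) < (b - δ) - (a + δ) := by linarith
  have hMidμ : ((b - δ) - (a + δ)) * μ (idx φ (a + δ) (b - δ)) =
      (b - a) * μ (idx φ a b) - δ * μ (idx φ a (a + δ)) - δ * μ (idx φ (b - δ) b) := by
    linarith only [hA1, hA2]
  have hMidν : ((b - δ) - (a + δ)) * ν (idx φ (a + δ) (b - δ)) =
      (b - a) * ν (idx φ a b) - δ * ν (idx φ a (a + δ)) - δ * ν (idx φ (b - δ) b) := by
    linarith only [hB1, hB2]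
  have main : ((b - δ) - (a + δ)) * ν (idx φ (a + δ) (b - δ)) <
      ((b - δ) - (a + δ)) * μ (idx φ (a + δ) (b - δ)) := by
    linarith only [hMidμ, hMidν, e0, e1, e2, e3, e4, e5, hδM, hδpos]
  have hfin : ν (idx φ (a + δ) (b - δ)) < μ (idx φ (a + δ) (b - δ)) :=
    (mul_lt_mul_iff_right₀ hdc).1 main
  rwa [idx_eq φ (⟨h0cc.le, hccd, hd1.le⟩ :
    (0:ℝ) ≤ a + δ ∧ a + δ < b - δ ∧ b - δ ≤ 1)] at hfin
end Rel
end
end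

section
/- Let f : X → Y be a continuous surjection of nonempty compact Hausdorff spaces. Then for every ν ∈ HY, the fiber (Hf)⁻¹(ν) is an H-convex subset of HX. -/
open Set MeasureTheory Topology Filter

noncomputable section

universe u

open intervalIntegral

def fracInd (c : ℝ) : ℝ → ℝ := fun s => if Int.fract s < c then 1 else 0

theorem fracInd_periodic (c : ℝ) : Function.Periodic (fracInd c) 1 := by
  intro s; simp [fracInd, Int.fract_add_intCast s 1]

theorem fracInd_measurable (c : ℝ) : Measurable (fracInd c) := by
  unfold fracInd
  exact Measurable.ite (measurableSet_lt measurable_fract measurable_const)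
    measurable_const measurable_const

theorem abs_fracInd_le (c : ℝ) (s : ℝ) : |fracInd c s| ≤ 1 := by
  unfold fracInd; split_ifs <;> simp

theorem bddMeasurable_intervalIntegrable {F : ℝ → ℝ} (hF : Measurable F) {C : ℝ}
    (hC : ∀ s, |F s| ≤ C) (a b : ℝ) : IntervalIntegrable F volume a b := by
  have h : ∀ u v : ℝ, IntegrableOn F (Set.Ioc u v) volume := by
    intro u v
    refine ⟨hF.aestronglyMeasurable, ?_⟩
    exact HasFiniteIntegral.restrict_of_bounded (C := C) (measure_Ioc_lt_top)
      (ae_of_all _ fun s => by rw [Real.norm_eq_abs]; exact hC s)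
  exact ⟨h a b, h b a⟩

theorem fracInd_intervalIntegrable (c a b : ℝ) : IntervalIntegrable (fracInd c) volume a b :=
  bddMeasurable_intervalIntegrable (fracInd_measurable c) (abs_fracInd_le c) a b

theorem fracInd_comp_intervalIntegrable (c : ℝ) (n : ℕ) (a b : ℝ) :
    IntervalIntegrable (fun s => fracInd c (n * s)) volume a b :=
  bddMeasurable_intervalIntegrable ((fracInd_measurable c).comp (measurable_const_mul _))
    (fun _ => abs_fracInd_le c _) a b

theorem fracInd_integral_zero_one {c : ℝ} (hc0 : 0 ≤ c) (hc1 : c ≤ 1) :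
    (∫ s in (0:ℝ)..1, fracInd c s) = c := by
  have h1 : (∫ s in (0:ℝ)..1, fracInd c s) = (∫ s in (0:ℝ)..c, fracInd c s) +
      ∫ s in c..1, fracInd c s :=
    (integral_add_adjacent_intervals (fracInd_intervalIntegrable c 0 c)
      (fracInd_intervalIntegrable c c 1)).symm
  have h2 : (∫ s in (0:ℝ)..c, fracInd c s) = ∫ s in (0:ℝ)..c, (1:ℝ) := by
    apply intervalIntegral.integral_congr_ae
    filter_upwards [compl_mem_ae_iff.mpr (Real.volume_singleton (a := c))] with s hs hmem
    rw [Set.uIoc_of_le hc0] at hmem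
    have hsc : s < c := lt_of_le_of_ne hmem.2 (by simpa using hs)
    have hf : Int.fract s = s := Int.fract_eq_self.mpr ⟨hmem.1.le, by linarith⟩
    simp [fracInd, hf, hsc]
  have h3 : (∫ s in c..(1:ℝ), fracInd c s) = ∫ s in c..(1:ℝ), (0:ℝ) := by
    apply intervalIntegral.integral_congr_ae
    filter_upwards [compl_mem_ae_iff.mpr (Real.volume_singleton (a := (1:ℝ)))] with s hs hmem
    rw [Set.uIoc_of_le hc1] at hmem
    have hs1 : s < 1 := lt_of_le_of_ne hmem.2 (by simpa using hs)
    have hf : Int.fract s = s := Int.fract_eq_self.mpr ⟨hc0.trans hmem.1.le, hs1⟩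
    simp [fracInd, hf, not_lt.mpr hmem.1.le]
  rw [h1, h2, h3]; simp

theorem floor_div_tendsto (t : ℝ) :
    Tendsto (fun n : ℕ => (⌊(n:ℝ) * t⌋ : ℝ) / n) atTop (𝓝 t) := by
  have h1 : Tendsto (fun n : ℕ => t - 1 / (n:ℝ)) atTop (𝓝 t) := by
    simpa using tendsto_const_nhds.sub (tendsto_one_div_atTop_nhds_zero_nat (𝕜 := ℝ))
  refine tendsto_of_tendsto_of_tendsto_of_le_of_le' h1 tendsto_const_nhds ?_ ?_
  · filter_upwards [eventually_ge_atTop 1] with n hn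
    have hn' : (0:ℝ) < n := by exact_mod_cast hn
    rw [le_div_iff₀ hn']
    have h2 : ((n:ℝ) * t) - 1 < (⌊(n:ℝ) * t⌋ : ℝ) := Int.sub_one_lt_floor _
    have h3 : (t - 1 / (n:ℝ)) * n = (n:ℝ) * t - 1 := by field_simp
    linarith
  · filter_upwards [eventually_ge_atTop 1] with n hn
    have hn' : (0:ℝ) < n := by exact_mod_cast hn
    rw [div_le_iff₀ hn']
    have := Int.floor_le ((n:ℝ) * t)
    linarith [Int.floor_le ((n:ℝ) * t)]

theorem ces (c t : ℝ) :
    Tendsto (fun n : ℕ => (∫ s in (0:ℝ)..((n:ℝ)*t), fracInd c s) / n) atTop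
      (𝓝 ((∫ s in (0:ℝ)..1, fracInd c s) * t)) := by
  set I : ℝ := ∫ s in (0:ℝ)..1, fracInd c s with hI
  set X₁ : ℝ := sInf ((fun r => ∫ x in (0:ℝ)..r, fracInd c x) '' Icc 0 1)
  set X₂ : ℝ := sSup ((fun r => ∫ x in (0:ℝ)..r, fracInd c x) '' Icc 0 1)
  have hlow : ∀ n : ℕ, 1 ≤ n → X₁ / n + (⌊(n:ℝ)*t⌋ : ℝ)/n * I ≤
      (∫ s in (0:ℝ)..((n:ℝ)*t), fracInd c s) / n := by
    intro n hn
    have hn' : (0:ℝ) < n := by exact_mod_cast hn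
    have h := (fracInd_periodic c).sInf_add_zsmul_le_integral_of_pos
      (fracInd_intervalIntegrable c 0 1) one_pos ((n:ℝ)*t)
    have h' : X₁ + (⌊(n:ℝ)*t⌋:ℝ) * I ≤ ∫ s in (0:ℝ)..((n:ℝ)*t), fracInd c s := by
      simpa [div_one, zsmul_eq_mul] using h
    have heq : X₁ / n + (⌊(n:ℝ)*t⌋ : ℝ)/n * I = (X₁ + (⌊(n:ℝ)*t⌋:ℝ) * I)/n := by ring
    rw [heq, div_le_div_iff_of_pos_right hn']
    exact h'
  have hhigh : ∀ n : ℕ, 1 ≤ n →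
      (∫ s in (0:ℝ)..((n:ℝ)*t), fracInd c s) / n ≤ X₂ / n + (⌊(n:ℝ)*t⌋ : ℝ)/n * I := by
    intro n hn
    have hn' : (0:ℝ) < n := by exact_mod_cast hn
    have h := (fracInd_periodic c).integral_le_sSup_add_zsmul_of_pos
      (fracInd_intervalIntegrable c 0 1) one_pos ((n:ℝ)*t)
    have h' : (∫ s in (0:ℝ)..((n:ℝ)*t), fracInd c s) ≤ X₂ + (⌊(n:ℝ)*t⌋:ℝ) * I := by
      simpa [div_one, zsmul_eq_mul] using h
    have heq : X₂ / n + (⌊(n:ℝ)*t⌋ : ℝ)/n * I = (X₂ + (⌊(n:ℝ)*t⌋:ℝ) * I)/n := by ring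
    rw [heq, div_le_div_iff_of_pos_right hn']
    exact h'
  have hf := floor_div_tendsto t
  have h1 : Tendsto (fun n : ℕ => X₁ / n + (⌊(n:ℝ)*t⌋ : ℝ)/n * I) atTop (𝓝 (I * t)) := by
    have h := ((tendsto_const_nhds (x := X₁)).div_atTop
      tendsto_natCast_atTop_atTop).add (hf.mul (tendsto_const_nhds (x := I)))
    convert h using 2
    ring
  have h2 : Tendsto (fun n : ℕ => X₂ / n + (⌊(n:ℝ)*t⌋ : ℝ)/n * I) atTop (𝓝 (I * t)) := by
    have h := ((tendsto_const_nhds (x := X₂)).div_atTop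
      tendsto_natCast_atTop_atTop).add (hf.mul (tendsto_const_nhds (x := I)))
    convert h using 2
    ring
  refine tendsto_of_tendsto_of_tendsto_of_le_of_le' h1 h2 ?_ ?_
  · filter_upwards [eventually_ge_atTop 1] with n hn using hlow n hn
  · filter_upwards [eventually_ge_atTop 1] with n hn using hhigh n hn

theorem core (c u v : ℝ) :
    Tendsto (fun n : ℕ => ∫ s in u..v, fracInd c ((n:ℝ)*s)) atTop
      (𝓝 ((∫ s in (0:ℝ)..1, fracInd c s) * (v - u))) := by
  have hev : ∀ᶠ n : ℕ in atTop, (∫ s in u..v, fracInd c ((n:ℝ)*s)) =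
      (∫ s in (0:ℝ)..((n:ℝ)*v), fracInd c s)/n - (∫ s in (0:ℝ)..((n:ℝ)*u), fracInd c s)/n := by
    filter_upwards [eventually_ge_atTop 1] with n hn
    have hn' : ((n:ℝ)) ≠ 0 := by positivity
    rw [intervalIntegral.integral_comp_mul_left (fracInd c) hn']
    rw [← intervalIntegral.integral_interval_sub_left (fracInd_intervalIntegrable c 0 _)
      (fracInd_intervalIntegrable c 0 _)]
    rw [smul_eq_mul, div_sub_div_same, inv_mul_eq_div]
  have := (ces c v).sub (ces c u)
  rw [← mul_sub] at this
  exact Tendsto.congr' (by filter_upwards [hev] with n h using h.symm) this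

def StepOn {X : Type u} (α : ℝ → X) (T : Finset ℝ) : Prop :=
  ∀ x ∈ Ico (0:ℝ) 1, ∀ y ∈ Ico (0:ℝ) 1, x ≤ y → (∀ p ∈ T, p ∉ Ioc x y) → α y = α x

theorem stepOn_mono {X : Type u} {α : ℝ → X} {T T' : Finset ℝ} (h : T ⊆ T')
    (hs : StepOn α T) : StepOn α T' := by
  intro x hx y hy hxy hp
  exact hs x hx y hy hxy fun p hpT => hp p (h hpT)

/-- existence of the piece containing `s` -/
theorem exists_piece {n : ℕ} {t : Fin (n+1) → ℝ}
    (h0 : t 0 = 0) (h1 : t (Fin.last n) = 1) (hm : StrictMono t)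
    {s : ℝ} (hs : s ∈ Ico (0:ℝ) 1) :
    ∃ i : Fin n, s ∈ Ico (t i.castSucc) (t i.succ) := by
  classical
  set F : Finset (Fin (n+1)) := Finset.univ.filter (fun j => t j ≤ s) with hF
  have h0F : (0 : Fin (n+1)) ∈ F := by
    simp [hF, h0, hs.1]
  have hFne : F.Nonempty := ⟨0, h0F⟩
  set j := F.max' hFne with hj
  have hjF : j ∈ F := F.max'_mem hFne
  have hjs : t j ≤ s := by simpa [hF] using hjF
  have hjlast : j ≠ Fin.last n := by
    intro h
    rw [h, h1] at hjs
    exact absurd hs.2 (not_lt.mpr hjs)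
  have hjlt : (j : ℕ) < n := by
    have := Fin.lt_last_iff_ne_last.mpr hjlast
    exact this
  refine ⟨⟨j, hjlt⟩, ⟨by simpa [Fin.castSucc] using hjs, ?_⟩⟩
  by_contra hcon
  push_neg at hcon
  have hmem : (Fin.succ ⟨(j:ℕ), hjlt⟩ : Fin (n+1)) ∈ F := by
    simp only [hF, Finset.mem_filter]
    exact ⟨Finset.mem_univ _, hcon⟩
  have hle := F.le_max' _ hmem
  rw [← hj] at hle
  have hv : ((Fin.succ ⟨(j:ℕ), hjlt⟩ : Fin (n+1)) : ℕ) ≤ (j : ℕ) := Fin.le_def.mp hle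
  simp [Fin.val_succ] at hv

theorem stepOn_of_isStepFun {X : Type u} {α : ℝ → X} (h : IsStepFun α) :
    ∃ T : Finset ℝ, (0:ℝ) ∈ T ∧ (1:ℝ) ∈ T ∧ ↑T ⊆ Icc (0:ℝ) 1 ∧ StepOn α T := by
  classical
  obtain ⟨n, t, h0, h1, hm, hstep⟩ := h
  refine ⟨Finset.univ.image t, ⟨?_, ?_, ?_, ?_⟩⟩
  · exact Finset.mem_image.mpr ⟨0, Finset.mem_univ _, h0⟩
  · exact Finset.mem_image.mpr ⟨Fin.last n, Finset.mem_univ _, h1⟩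
  · rintro p hp
    simp only [Finset.coe_image, Finset.coe_univ, Set.image_univ, Set.mem_range] at hp
    obtain ⟨j, rfl⟩ := hp
    constructor
    · rw [← h0]; exact hm.monotone (Fin.zero_le j)
    · rw [← h1]; exact hm.monotone (Fin.le_last j)
  · intro x hx y hy hxy hp
    obtain ⟨i, hi⟩ := exists_piece h0 h1 hm hx
    have hylt : y < t i.succ := by
      by_contra hcon
      push_neg at hcon
      exact hp (t i.succ) (Finset.mem_image.mpr ⟨_, Finset.mem_univ _, rfl⟩) ⟨hi.2, hcon⟩
    rw [hstep i y ⟨hi.1.trans hxy, hylt⟩, hstep i x ⟨hi.1, hi.2⟩]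

theorem isStepFun_of_stepOn {X : Type u} {α : ℝ → X} {T : Finset ℝ}
    (h0 : (0:ℝ) ∈ T) (h1 : (1:ℝ) ∈ T) (hsub : ↑T ⊆ Icc (0:ℝ) 1) (hs : StepOn α T) :
    IsStepFun α := by
  classical
  have hcard : 2 ≤ T.card := Finset.one_lt_card.mpr ⟨0, h0, 1, h1, by norm_num⟩
  obtain ⟨n, hn⟩ : ∃ n, T.card = n + 1 := ⟨T.card - 1, by omega⟩
  set e := T.orderIsoOfFin hn with he
  set t : Fin (n+1) → ℝ := fun i => (e i : ℝ) with ht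
  have hmono : StrictMono t := fun i j hij => by
    exact_mod_cast (e.lt_iff_lt.mpr hij)
  have ht0 : t 0 = 0 := by
    have hle : t 0 ≤ 0 := by
      have := e.monotone (Fin.zero_le (e.symm ⟨0, h0⟩))
      simpa [ht] using (Subtype.coe_le_coe.mpr this).trans_eq (by simp)
    have hge : (0:ℝ) ≤ t 0 := (hsub (e 0).2).1
    linarith
  have ht1 : t (Fin.last n) = 1 := by
    have hge : 1 ≤ t (Fin.last n) := by
      have := e.monotone (Fin.le_last (e.symm ⟨1, h1⟩))
      have h' : ((1:ℝ)) ≤ (e (Fin.last n) : ℝ) := by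
        have := Subtype.coe_le_coe.mpr this
        simpa using this
      simpa [ht] using h'
    have hle : t (Fin.last n) ≤ 1 := (hsub (e (Fin.last n)).2).2
    linarith
  refine ⟨n, t, ht0, ht1, hmono, ?_⟩
  intro i s hsi
  have hx : t i.castSucc ∈ Ico (0:ℝ) 1 := by
    refine ⟨(hsub (e i.castSucc).2).1, ?_⟩
    exact lt_of_lt_of_le (hmono (Fin.castSucc_lt_succ (i := i))) (hsub (e i.succ).2).2
  have hy : s ∈ Ico (0:ℝ) 1 := by
    refine ⟨hx.1.trans hsi.1, lt_of_lt_of_le hsi.2 (hsub (e i.succ).2).2⟩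
  refine hs _ hx s hy hsi.1 ?_
  intro p hp hmem
  set j := e.symm ⟨p, hp⟩ with hj
  have hpj : t j = p := by simp [ht, hj]
  have hlt1 : i.castSucc < j := by
    have : t i.castSucc < t j := by rw [hpj]; exact hmem.1
    exact hmono.lt_iff_lt.mp this
  have hlt2 : j < i.succ := by
    have : t j < t i.succ := by rw [hpj]; exact lt_of_le_of_lt hmem.2 hsi.2
    exact hmono.lt_iff_lt.mp this
  have : (i.castSucc : ℕ) < (j:ℕ) := hlt1
  have : (j:ℕ) < (i.succ : ℕ) := hlt2
  simp [Fin.coe_castSucc, Fin.val_succ] at *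
  omega

theorem isStepFun_glue {X : Type u} {α β : ℝ → X} (hα : IsStepFun α) (hβ : IsStepFun β)
    {t : ℝ} (ht0 : 0 < t) (ht1 : t < 1) :
    IsStepFun (fun s => if s < t then α s else β s) := by
  classical
  obtain ⟨Tα, hα0, hα1, hαsub, hαs⟩ := stepOn_of_isStepFun hα
  obtain ⟨Tβ, hβ0, hβ1, hβsub, hβs⟩ := stepOn_of_isStepFun hβ
  refine isStepFun_of_stepOn (T := Tα ∪ Tβ ∪ {t}) ?_ ?_ ?_ ?_
  · simp [hα0]
  · simp [hα1]
  · intro p hp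
    simp only [Finset.coe_union, Set.mem_union, Finset.coe_singleton, Set.mem_singleton_iff] at hp
    rcases hp with (hp | hp) | rfl
    · exact hαsub hp
    · exact hβsub hp
    · exact ⟨ht0.le, ht1.le⟩
  · intro x hx y hy hxy hp
    have hnt : t ∉ Ioc x y := hp t (by simp)
    have hiff : x < t ↔ y < t := by
      constructor
      · intro h
        by_contra hcon
        exact hnt ⟨h, not_lt.mp hcon⟩
      · intro h
        exact lt_of_le_of_lt hxy h
    by_cases hxt : x < t
    · have hyt : y < t := hiff.mp hxt
      simp only [if_pos hxt, if_pos hyt]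
      exact hαs x hx y hy hxy fun p hpT hmem => hp p (by simp [hpT]) hmem
    · have hyt : ¬ y < t := fun h => hxt (hiff.mpr h)
      simp only [if_neg hxt, if_neg hyt]
      exact hβs x hx y hy hxy fun p hpT hmem => hp p (by simp [hpT]) hmem

theorem isStepFun_fracGlue {X : Type u} {α β : ℝ → X} (hα : IsStepFun α) (hβ : IsStepFun β)
    {c : ℝ} (hc0 : 0 ≤ c) (hc1 : c ≤ 1) {n : ℕ} (hn : 1 ≤ n) :
    IsStepFun (fun s => if Int.fract ((n:ℝ)*s) < c then α s else β s) := by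
  classical
  obtain ⟨Tα, hα0, hα1, hαsub, hαs⟩ := stepOn_of_isStepFun hα
  obtain ⟨Tβ, hβ0, hβ1, hβsub, hβs⟩ := stepOn_of_isStepFun hβ
  have hnR : (0:ℝ) < n := by exact_mod_cast hn
  set G : Finset ℝ := (Finset.range (n+1)).image (fun k : ℕ => (k:ℝ)/(n:ℝ)) ∪
      (Finset.range n).image (fun k : ℕ => ((k:ℝ)+c)/(n:ℝ)) with hG
  refine isStepFun_of_stepOn (T := Tα ∪ Tβ ∪ G) ?_ ?_ ?_ ?_
  · simp [hα0]
  · simp [hα1]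
  · intro p hp
    simp only [Finset.coe_union, Set.mem_union] at hp
    rcases hp with (hp | hp) | hp
    · exact hαsub hp
    · exact hβsub hp
    · simp only [hG, Finset.coe_union, Set.mem_union, Finset.coe_image, Set.mem_image,
        Finset.mem_coe, Finset.mem_range] at hp
      rcases hp with ⟨k, hk, rfl⟩ | ⟨k, hk, rfl⟩
      · refine ⟨by positivity, ?_⟩
        rw [div_le_one hnR]
        exact_mod_cast Nat.cast_le.mpr (by omega : k ≤ n)
      · refine ⟨by positivity, ?_⟩
        rw [div_le_one hnR]
        have h1 : (k:ℝ) + 1 ≤ n := by exact_mod_cast hk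
        linarith
  · intro x hx y hy hxy hp
    have hfl : ⌊(n:ℝ)*x⌋ = ⌊(n:ℝ)*y⌋ := by
      by_contra hne
      have hlt : ⌊(n:ℝ)*x⌋ < ⌊(n:ℝ)*y⌋ :=
        lt_of_le_of_ne (Int.floor_le_floor (by nlinarith)) hne
      set k := ⌊(n:ℝ)*x⌋ with hk
      have hk0 : 0 ≤ k := Int.floor_nonneg.mpr (by nlinarith [hx.1])
      have hkn : k + 1 ≤ (n:ℤ) := by
        have h1 : (k:ℝ) ≤ (n:ℝ)*x := Int.floor_le _
        have h2 : (n:ℝ)*x < n := by nlinarith [hx.2]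
        have h3 : (k:ℝ) < (n:ℝ) := lt_of_le_of_lt h1 h2
        have h4 : k < (n:ℤ) := by exact_mod_cast h3
        omega
      have hcast : (((k+1).toNat : ℕ) : ℝ) = (k:ℝ) + 1 := by
        exact_mod_cast Int.toNat_of_nonneg (by omega : (0:ℤ) ≤ k + 1)
      have hmemG : ((k:ℝ)+1)/(n:ℝ) ∈ G := by
        rw [hG]
        refine Finset.mem_union_left _ (Finset.mem_image.mpr ⟨(k+1).toNat, ?_, ?_⟩)
        · rw [Finset.mem_range]; omega
        · rw [hcast]
      refine hp (((k:ℝ)+1)/(n:ℝ)) (Finset.mem_union_right _ hmemG) ⟨?_, ?_⟩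
      · rw [lt_div_iff₀ hnR]
        have := Int.lt_floor_add_one ((n:ℝ)*x)
        push_cast
        linarith
      · rw [div_le_iff₀ hnR]
        have h1 : ((k:ℝ)+1) ≤ (⌊(n:ℝ)*y⌋ : ℝ) := by exact_mod_cast (by omega : k + 1 ≤ ⌊(n:ℝ)*y⌋)
        linarith [Int.floor_le ((n:ℝ)*y)]
    have hfx : Int.fract ((n:ℝ)*x) = (n:ℝ)*x - ⌊(n:ℝ)*x⌋ := (Int.self_sub_floor _).symm
    have hfy : Int.fract ((n:ℝ)*y) = (n:ℝ)*y - (⌊(n:ℝ)*x⌋:ℝ) := by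
      rw [hfl]; exact (Int.self_sub_floor _).symm
    have hiff : Int.fract ((n:ℝ)*x) < c ↔ Int.fract ((n:ℝ)*y) < c := by
      constructor
      · intro h
        by_contra hcon
        push_neg at hcon
        set k := ⌊(n:ℝ)*x⌋ with hk
        have hk0 : 0 ≤ k := Int.floor_nonneg.mpr (by nlinarith [hx.1])
        have hkn : k < (n:ℤ) := by
          have h1 : (k:ℝ) < (n:ℝ) := lt_of_le_of_lt (Int.floor_le _) (by nlinarith [hx.2])
          exact_mod_cast h1
        have hcast : ((k.toNat : ℕ) : ℝ) = (k:ℝ) := by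
          exact_mod_cast Int.toNat_of_nonneg hk0
        have hmemG : ((k:ℝ)+c)/(n:ℝ) ∈ G := by
          rw [hG]
          refine Finset.mem_union_right _ (Finset.mem_image.mpr ⟨k.toNat, ?_, ?_⟩)
          · rw [Finset.mem_range]; omega
          · rw [hcast]
        refine hp (((k:ℝ)+c)/(n:ℝ)) (Finset.mem_union_right _ hmemG) ⟨?_, ?_⟩
        · rw [lt_div_iff₀ hnR]
          rw [hfx] at h
          linarith
        · rw [div_le_iff₀ hnR]
          rw [hfy] at hcon
          linarith
      · intro h
        by_contra hcon
        push_neg at hcon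
        rw [hfx] at hcon
        rw [hfy] at h
        nlinarith
    by_cases hxc : Int.fract ((n:ℝ)*x) < c
    · have hyc : Int.fract ((n:ℝ)*y) < c := hiff.mp hxc
      simp only [if_pos hxc, if_pos hyc]
      exact hαs x hx y hy hxy fun p hpT hmem => hp p (by simp [hpT]) hmem
    · have hyc : ¬ Int.fract ((n:ℝ)*y) < c := fun h => hxc (hiff.mpr h)
      simp only [if_neg hxc, if_neg hyc]
      exact hβs x hx y hy hxy fun p hpT hmem => hp p (by simp [hpT]) hmem

/-- interval integral congruence off two exceptional points -/
theorem integral_congr_ae2 {f g : ℝ → ℝ} {a b p q : ℝ}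
    (h : ∀ s ∈ Set.uIoc a b, s ≠ p → s ≠ q → f s = g s) :
    ∫ s in a..b, f s = ∫ s in a..b, g s := by
  apply intervalIntegral.integral_congr_ae
  filter_upwards [compl_mem_ae_iff.mpr (Real.volume_singleton (a := p)),
    compl_mem_ae_iff.mpr (Real.volume_singleton (a := q))] with s hp hq hmem
  exact h s hmem (by simpa using hp) (by simpa using hq)

theorem isStepFun_rep {X : Type u} {α : ℝ → X} (h : IsStepFun α) (F : X → ℝ) :
    ∃ (m : ℕ) (u v K : Fin m → ℝ), (∀ i, u i ≤ v i) ∧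
      (∀ s ∈ Ico (0:ℝ) 1, F (α s) =
        ∑ i, (Ico (u i) (v i)).indicator (fun _ => K i) s) := by
  obtain ⟨n, t, h0, h1, hm, hstep⟩ := h
  refine ⟨n, fun i => t i.castSucc, fun i => t i.succ, fun i => F (α (t i.castSucc)),
    fun i => (hm (Fin.castSucc_lt_succ (i := i))).le, ?_⟩
  intro s hs
  obtain ⟨i₀, hi₀⟩ := exists_piece h0 h1 hm hs
  rw [Finset.sum_eq_single_of_mem i₀ (Finset.mem_univ _)]
  · rw [Set.indicator_of_mem hi₀, hstep i₀ s hi₀]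
  · intro j _ hj
    apply Set.indicator_of_notMem
    intro hmem
    rcases lt_or_gt_of_ne hj with hlt | hlt
    · have hle : (j.succ : Fin (n+1)) ≤ i₀.castSucc := by
        rw [Fin.le_def]
        simp only [Fin.val_succ, Fin.coe_castSucc]
        exact Fin.lt_def.mp hlt
      have : t j.succ ≤ t i₀.castSucc := hm.monotone hle
      exact absurd hmem.2 (not_lt.mpr (this.trans hi₀.1))
    · have hle : (i₀.succ : Fin (n+1)) ≤ j.castSucc := by
        rw [Fin.le_def]
        simp only [Fin.val_succ, Fin.coe_castSucc]
        exact Fin.lt_def.mp hlt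
      have : t i₀.succ ≤ t j.castSucc := hm.monotone hle
      exact absurd hi₀.2 (not_lt.mpr (this.trans hmem.1))

theorem indicator_sum_measurable {m : ℕ} (u v K : Fin m → ℝ) :
    Measurable (fun s => ∑ i, (Ico (u i) (v i)).indicator (fun _ => K i) s) := by
  apply Finset.measurable_sum
  intro i _
  exact Measurable.indicator measurable_const measurableSet_Ico

theorem indicator_sum_bound {m : ℕ} (u v K : Fin m → ℝ) (s : ℝ) :
    |∑ i, (Ico (u i) (v i)).indicator (fun _ => K i) s| ≤ ∑ i, |K i| := by
  refine (Finset.abs_sum_le_sum_abs _ _).trans (Finset.sum_le_sum ?_)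
  intro i _
  by_cases hmem : s ∈ Ico (u i) (v i) <;> simp [hmem]

theorem ae_ne_one : ∀ᵐ s : ℝ ∂volume, s ≠ 1 := by
  rw [ae_iff]
  have : {s : ℝ | ¬ s ≠ 1} = {1} := by
    ext s; simp
  rw [this]
  exact Real.volume_singleton

theorem step_comp_ae_eq {X : Type u} {α : ℝ → X} {F : X → ℝ} {ψ : ℝ → ℝ}
    (h : ∀ s ∈ Ico (0:ℝ) 1, F (α s) = ψ s) {a b : ℝ}
    (ha : a ∈ Icc (0:ℝ) 1) (hb : b ∈ Icc (0:ℝ) 1) :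
    ∀ s ∈ Set.uIoc a b, s ≠ 1 → F (α s) = ψ s := by
  intro s hs hs1
  refine h s ⟨?_, ?_⟩
  · exact le_trans (le_min ha.1 hb.1) hs.1.le
  · exact lt_of_le_of_ne (hs.2.trans (max_le ha.2 hb.2)) hs1

theorem bddMeasurable_integrableOn {F : ℝ → ℝ} (hF : Measurable F) {C : ℝ}
    (hC : ∀ s, |F s| ≤ C) (p q : ℝ) : IntegrableOn F (Set.Ioc p q) volume := by
  refine ⟨hF.aestronglyMeasurable, ?_⟩
  exact HasFiniteIntegral.restrict_of_bounded (C := C) (measure_Ioc_lt_top)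
    (ae_of_all _ fun s => by rw [Real.norm_eq_abs]; exact hC s)

theorem step_intervalIntegrable {X : Type u} {α : ℝ → X} (h : IsStepFun α) (F : X → ℝ)
    {a b : ℝ} (ha : a ∈ Icc (0:ℝ) 1) (hb : b ∈ Icc (0:ℝ) 1) :
    IntervalIntegrable (fun s => F (α s)) volume a b := by
  obtain ⟨m, u, v, K, huv, hrep⟩ := isStepFun_rep h F
  have key : ∀ p q : ℝ, p ∈ Icc (0:ℝ) 1 → q ∈ Icc (0:ℝ) 1 →
      IntegrableOn (fun s => F (α s)) (Set.Ioc p q) volume := by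
    intro p q hp hq
    have hψ : IntegrableOn (fun s => ∑ i, (Ico (u i) (v i)).indicator (fun _ => K i) s)
        (Set.Ioc p q) volume :=
      bddMeasurable_integrableOn (indicator_sum_measurable u v K) (indicator_sum_bound u v K) p q
    refine hψ.congr ?_
    have h1 : ∀ᵐ s ∂volume.restrict (Set.Ioc p q), s ∈ Set.Ioc p q :=
      ae_restrict_mem measurableSet_Ioc
    have h2 : ∀ᵐ s ∂volume.restrict (Set.Ioc p q), s ≠ 1 := ae_restrict_of_ae ae_ne_one
    filter_upwards [h1, h2] with s hs hs1
    exact (hrep s ⟨le_trans hp.1 hs.1.le, lt_of_le_of_ne (hs.2.trans hq.2) hs1⟩).symm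
  exact ⟨key a b ha hb, key b a hb ha⟩

theorem piece_tendsto {c K u v a b : ℝ} (huv : u ≤ v) (hab : a ≤ b) :
    Tendsto (fun n : ℕ => ∫ s in a..b, fracInd c ((n:ℝ)*s) *
        (Ico u v).indicator (fun _ => K) s) atTop
      (𝓝 ((∫ s in (0:ℝ)..1, fracInd c s) *
        ∫ s in a..b, (Ico u v).indicator (fun _ => K) s)) := by
  set u' := min (max u a) b with hu'
  set v' := min (max v a) b with hv'
  have hau' : a ≤ u' := le_min (le_max_right u a) hab
  have hu'v' : u' ≤ v' := min_le_min (max_le_max huv (le_refl a)) (le_refl b)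
  have hv'b : v' ≤ b := min_le_right _ _
  have hpt : ∀ s ∈ Set.uIoc a b, s ≠ u → s ≠ v →
      (Ico u v).indicator (fun _ => K) s = (Ioc u' v').indicator (fun _ => K) s := by
    intro s hs hsu hsv
    rw [Set.uIoc_of_le hab] at hs
    have hiff : s ∈ Ico u v ↔ s ∈ Ioc u' v' := by
      constructor
      · rintro ⟨h1, h2⟩
        have hus : u < s := lt_of_le_of_ne h1 (Ne.symm hsu)
        exact ⟨min_lt_iff.mpr (Or.inl (max_lt hus hs.1)),
          le_min (le_max_of_le_left h2.le) hs.2⟩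
      · rintro ⟨h1, h2⟩
        have hsmax : s ≤ max v a := h2.trans (min_le_left _ _)
        have hsv' : s < v := by
          rcases le_max_iff.mp hsmax with h | h
          · exact lt_of_le_of_ne h hsv
          · exact absurd h (not_le.mpr hs.1)
        have husa : max u a < s := by
          rcases min_lt_iff.mp h1 with h | h
          · exact h
          · exact absurd h (not_lt.mpr hs.2)
        exact ⟨(le_max_left u a).trans husa.le, hsv'⟩
    by_cases hm : s ∈ Ico u v
    · rw [Set.indicator_of_mem hm, Set.indicator_of_mem (hiff.mp hm)]
    · rw [Set.indicator_of_notMem hm, Set.indicator_of_notMem (fun hh => hm (hiff.mpr hh))]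
  have hFmeas : ∀ n : ℕ, Measurable (fun s => fracInd c ((n:ℝ)*s) *
      (Ioc u' v').indicator (fun _ => K) s) := fun n =>
    ((fracInd_measurable c).comp (measurable_const_mul _)).mul
      (Measurable.indicator measurable_const measurableSet_Ioc)
  have hFbd : ∀ n : ℕ, ∀ s : ℝ, |fracInd c ((n:ℝ)*s) *
      (Ioc u' v').indicator (fun _ => K) s| ≤ |K| := by
    intro n s
    rw [abs_mul]
    calc |fracInd c ((n:ℝ)*s)| * |(Ioc u' v').indicator (fun _ => K) s|
        ≤ 1 * |K| := by
          apply mul_le_mul (abs_fracInd_le c _) ?_ (abs_nonneg _) zero_le_one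
          by_cases hm : s ∈ Ioc u' v' <;> simp [hm]
      _ = |K| := one_mul _
  have hFint : ∀ n : ℕ, ∀ p q : ℝ, IntervalIntegrable (fun s => fracInd c ((n:ℝ)*s) *
      (Ioc u' v').indicator (fun _ => K) s) volume p q := fun n p q =>
    bddMeasurable_intervalIntegrable (hFmeas n) (hFbd n) p q
  have key : ∀ n : ℕ, (∫ s in a..b, fracInd c ((n:ℝ)*s) * (Ico u v).indicator (fun _ => K) s)
      = (∫ s in u'..v', fracInd c ((n:ℝ)*s)) * K := by
    intro n
    rw [integral_congr_ae2 (p := u) (q := v)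
      (fun s hs h1 h2 => by rw [hpt s hs h1 h2])]
    rw [← integral_add_adjacent_intervals (a := a) (b := u') (c := b) (hFint n _ _) (hFint n _ _),
      ← integral_add_adjacent_intervals (a := u') (b := v') (c := b) (hFint n _ _) (hFint n _ _)]
    have e1 : (∫ s in a..u', fracInd c ((n:ℝ)*s) * (Ioc u' v').indicator (fun _ => K) s) = 0 := by
      rw [integral_congr_ae2 (p := (1:ℝ)) (q := (1:ℝ)) (g := fun _ => (0:ℝ))
        (fun s hs _ _ => ?_), intervalIntegral.integral_zero]
      rw [Set.uIoc_of_le hau'] at hs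
      rw [Set.indicator_of_notMem (fun hh => absurd hs.2 (not_le.mpr hh.1)), mul_zero]
    have e3 : (∫ s in v'..b, fracInd c ((n:ℝ)*s) * (Ioc u' v').indicator (fun _ => K) s) = 0 := by
      rw [integral_congr_ae2 (p := (1:ℝ)) (q := (1:ℝ)) (g := fun _ => (0:ℝ))
        (fun s hs _ _ => ?_), intervalIntegral.integral_zero]
      rw [Set.uIoc_of_le hv'b] at hs
      rw [Set.indicator_of_notMem (fun hh => absurd hs.1 (not_lt.mpr hh.2)), mul_zero]
    have e2 : (∫ s in u'..v', fracInd c ((n:ℝ)*s) * (Ioc u' v').indicator (fun _ => K) s)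
        = (∫ s in u'..v', fracInd c ((n:ℝ)*s)) * K := by
      rw [← intervalIntegral.integral_mul_const]
      refine integral_congr_ae2 (p := (1:ℝ)) (q := (1:ℝ)) (fun s hs _ _ => ?_)
      rw [Set.uIoc_of_le hu'v'] at hs
      rw [Set.indicator_of_mem hs]
    rw [e1, e2, e3]
    ring
  have hval : (∫ s in a..b, (Ico u v).indicator (fun _ => K) s) = K * (v' - u') := by
    have hind : ∀ p q : ℝ, IntervalIntegrable
        (fun s => (Ioc u' v').indicator (fun _ => K) s) volume p q := fun p q =>
      bddMeasurable_intervalIntegrable (Measurable.indicator measurable_const measurableSet_Ioc)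
        (C := |K|) (fun s => by by_cases hm : s ∈ Ioc u' v' <;> simp [hm]) p q
    rw [integral_congr_ae2 (p := u) (q := v) (fun s hs h1 h2 => by rw [hpt s hs h1 h2])]
    rw [← integral_add_adjacent_intervals (a := a) (b := u') (c := b) (hind _ _) (hind _ _),
      ← integral_add_adjacent_intervals (a := u') (b := v') (c := b) (hind _ _) (hind _ _)]
    have e1 : (∫ s in a..u', (Ioc u' v').indicator (fun _ => K) s) = 0 := by
      rw [integral_congr_ae2 (p := (1:ℝ)) (q := (1:ℝ)) (g := fun _ => (0:ℝ))
        (fun s hs _ _ => ?_), intervalIntegral.integral_zero]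
      rw [Set.uIoc_of_le hau'] at hs
      rw [Set.indicator_of_notMem (fun hh => absurd hs.2 (not_le.mpr hh.1))]
    have e3 : (∫ s in v'..b, (Ioc u' v').indicator (fun _ => K) s) = 0 := by
      rw [integral_congr_ae2 (p := (1:ℝ)) (q := (1:ℝ)) (g := fun _ => (0:ℝ))
        (fun s hs _ _ => ?_), intervalIntegral.integral_zero]
      rw [Set.uIoc_of_le hv'b] at hs
      rw [Set.indicator_of_notMem (fun hh => absurd hs.1 (not_lt.mpr hh.2))]
    have e2 : (∫ s in u'..v', (Ioc u' v').indicator (fun _ => K) s)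
        = K * (v' - u') := by
      rw [integral_congr_ae2 (p := (1:ℝ)) (q := (1:ℝ)) (g := fun _ => K)
        (fun s hs _ _ => ?_)]
      · rw [intervalIntegral.integral_const, smul_eq_mul]; ring
      · rw [Set.uIoc_of_le hu'v'] at hs
        rw [Set.indicator_of_mem hs]
    rw [e1, e2, e3]
    ring
  rw [hval]
  have h3 : Tendsto (fun n : ℕ => ∫ s in a..b, fracInd c ((n:ℝ)*s) *
      (Ico u v).indicator (fun _ => K) s) atTop
      (𝓝 ((∫ s in (0:ℝ)..1, fracInd c s) * (v' - u') * K)) :=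
    ((core c u' v').mul_const K).congr (fun n => (key n).symm)
  convert h3 using 2
  ring


theorem step_tendsto {X : Type u} {α : ℝ → X} (h : IsStepFun α) (F : X → ℝ)
    {c a b : ℝ} (hab : a ≤ b) (ha : a ∈ Icc (0:ℝ) 1) (hb : b ∈ Icc (0:ℝ) 1)
    (hc : c ∈ Icc (0:ℝ) 1) :
    Tendsto (fun n : ℕ => ∫ s in a..b, fracInd c ((n:ℝ)*s) * F (α s)) atTop
      (𝓝 (c * ∫ s in a..b, F (α s))) := by
  obtain ⟨m, u, v, K, huv, hrep⟩ := isStepFun_rep h F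
  set ψ : ℝ → ℝ := fun s => ∑ i, (Ico (u i) (v i)).indicator (fun _ => K i) s with hψ
  have hI : (∫ s in (0:ℝ)..1, fracInd c s) = c := fracInd_integral_zero_one hc.1 hc.2
  have hint : ∀ (n : ℕ) (i : Fin m), IntervalIntegrable
      (fun s => fracInd c ((n:ℝ)*s) * (Ico (u i) (v i)).indicator (fun _ => K i) s)
      volume a b := by
    intro n i
    refine bddMeasurable_intervalIntegrable
      (((fracInd_measurable c).comp (measurable_const_mul _)).mul
        (Measurable.indicator measurable_const measurableSet_Ico)) (C := |K i|) ?_ a b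
    intro s
    show |fracInd c ((n:ℝ)*s) * (Ico (u i) (v i)).indicator (fun _ => K i) s| ≤ |K i|
    rw [abs_mul]
    calc |fracInd c ((n:ℝ)*s)| * |(Ico (u i) (v i)).indicator (fun _ => K i) s|
        ≤ 1 * |K i| := by
          apply mul_le_mul (abs_fracInd_le c _) ?_ (abs_nonneg _) zero_le_one
          by_cases hmem : s ∈ Ico (u i) (v i) <;> simp [hmem]
      _ = |K i| := one_mul _
  have hintind : ∀ i : Fin m, IntervalIntegrable
      (fun s => (Ico (u i) (v i)).indicator (fun _ => K i) s) volume a b := by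
    intro i
    refine bddMeasurable_intervalIntegrable
      (Measurable.indicator measurable_const measurableSet_Ico) (C := |K i|) ?_ a b
    intro s
    by_cases hmem : s ∈ Ico (u i) (v i) <;> simp [hmem]
  have key : ∀ n : ℕ, (∫ s in a..b, fracInd c ((n:ℝ)*s) * F (α s)) =
      ∑ i, ∫ s in a..b, fracInd c ((n:ℝ)*s) *
        (Ico (u i) (v i)).indicator (fun _ => K i) s := by
    intro n
    rw [integral_congr_ae2 (p := (1:ℝ)) (q := (1:ℝ))
      (g := fun s => ∑ i, fracInd c ((n:ℝ)*s) * (Ico (u i) (v i)).indicator (fun _ => K i) s)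
      (fun s hs h1 _ => by rw [step_comp_ae_eq hrep ha hb s hs h1]; simp [Finset.mul_sum])]
    exact intervalIntegral.integral_finset_sum (fun i _ => hint n i)
  have hval : (∫ s in a..b, F (α s)) = ∑ i, ∫ s in a..b,
      (Ico (u i) (v i)).indicator (fun _ => K i) s := by
    rw [integral_congr_ae2 (p := (1:ℝ)) (q := (1:ℝ)) (g := ψ)
      (fun s hs h1 _ => step_comp_ae_eq hrep ha hb s hs h1)]
    exact intervalIntegral.integral_finset_sum (fun i _ => hintind i)
  have hsum : Tendsto (fun n : ℕ => ∑ i, ∫ s in a..b, fracInd c ((n:ℝ)*s) *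
      (Ico (u i) (v i)).indicator (fun _ => K i) s) atTop
      (𝓝 (∑ i, (∫ s in (0:ℝ)..1, fracInd c s) *
        ∫ s in a..b, (Ico (u i) (v i)).indicator (fun _ => K i) s)) :=
    tendsto_finset_sum _ (fun i _ => piece_tendsto (huv i) hab)
  rw [hval, Finset.mul_sum]
  simp_rw [hI] at hsum
  exact Tendsto.congr (fun n => (key n).symm) hsum

-- === HM-level lemmas ===
theorem hset_avg {Y : Type u} [TopologicalSpace Y] {ν : HMIdx Y → ℝ} (hν : ν ∈ HSet Y)
    (φ : C(Y, ℝ)) {a t b : ℝ} (ha : 0 ≤ a) (hat : a < t) (htb : t < b) (hb : b ≤ 1) :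
    (b - a) * ν ⟨φ, ⟨(a,b), ha, hat.trans htb, hb⟩⟩ =
      (t - a) * ν ⟨φ, ⟨(a,t), ha, hat, htb.le.trans hb⟩⟩ +
        (b - t) * ν ⟨φ, ⟨(t,b), ha.trans hat.le, htb, hb⟩⟩ := by
  set S : Set (HMIdx Y → ℝ) := {μ | (b - a) * μ ⟨φ, ⟨(a,b), ha, hat.trans htb, hb⟩⟩ =
      (t - a) * μ ⟨φ, ⟨(a,t), ha, hat, htb.le.trans hb⟩⟩ +
        (b - t) * μ ⟨φ, ⟨(t,b), ha.trans hat.le, htb, hb⟩⟩} with hS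
  have hclosed : IsClosed S := by
    apply isClosed_eq
    · exact continuous_const.mul (continuous_apply _)
    · exact (continuous_const.mul (continuous_apply _)).add
        (continuous_const.mul (continuous_apply _))
  have hsub : hmEmbed '' {α : ℝ → Y | IsStepFun α} ⊆ S := by
    rintro _ ⟨γ, hγ, rfl⟩
    have hbb : b ≤ 1 := hb
    have hIab : a ∈ Icc (0:ℝ) 1 := ⟨ha, ((hat.trans htb).le).trans hb⟩
    have hIt : t ∈ Icc (0:ℝ) 1 := ⟨ha.trans hat.le, htb.le.trans hb⟩
    have hIb : b ∈ Icc (0:ℝ) 1 := ⟨ha.trans (hat.trans htb).le, hb⟩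
    have hadd : (∫ s in a..t, φ (γ s)) + (∫ s in t..b, φ (γ s)) = ∫ s in a..b, φ (γ s) :=
      integral_add_adjacent_intervals (step_intervalIntegrable hγ φ hIab hIt)
        (step_intervalIntegrable hγ φ hIt hIb)
    show (b - a) * ((b - a)⁻¹ * ∫ s in a..b, φ (γ s)) =
      (t - a) * ((t - a)⁻¹ * ∫ s in a..t, φ (γ s)) +
        (b - t) * ((b - t)⁻¹ * ∫ s in t..b, φ (γ s))
    rw [mul_inv_cancel_left₀ (sub_ne_zero.mpr (hat.trans htb).ne'),
      mul_inv_cancel_left₀ (sub_ne_zero.mpr hat.ne'),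
      mul_inv_cancel_left₀ (sub_ne_zero.mpr htb.ne'), ← hadd]
  exact closure_minimal hsub hclosed hν

theorem emap_zero {X : Type u} [TopologicalSpace X] (μ β : HMIdx X → ℝ) :
    emap μ β 0 = β := by
  funext p
  unfold emap
  rw [dif_neg (not_le.mpr (lt_of_le_of_lt p.2.2.1 p.2.2.2.1)), dif_pos p.2.2.1]

theorem emap_one {X : Type u} [TopologicalSpace X] (μ β : HMIdx X → ℝ) :
    emap μ β 1 = μ := by
  funext p
  unfold emap
  rw [dif_pos p.2.2.2.2]

theorem emap_self {Y : Type u} [TopologicalSpace Y] {ν : HMIdx Y → ℝ} (hν : ν ∈ HSet Y)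
    (t : ℝ) : emap ν ν t = ν := by
  funext p
  obtain ⟨φ, ⟨⟨a, b⟩, ha, hab, hb⟩⟩ := p
  unfold emap
  by_cases h1 : b ≤ t
  · rw [dif_pos h1]
  rw [dif_neg h1]
  by_cases h2 : t ≤ a
  · rw [dif_pos h2]
  rw [dif_neg h2]
  have hat : a < t := lt_of_not_ge h2
  have htb : t < b := lt_of_not_ge h1
  have h := hset_avg hν φ ha hat htb hb
  have hne : b - a ≠ 0 := sub_ne_zero.mpr hab.ne'
  have hfin : ((t - a) * ν ⟨φ, ⟨(a,t), ha, hat, htb.le.trans hb⟩⟩ +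
      (b - t) * ν ⟨φ, ⟨(t,b), ha.trans hat.le, htb, hb⟩⟩) / (b - a) =
      ν ⟨φ, ⟨(a,b), ha, hat.trans htb, hb⟩⟩ := by
    rw [← h]
    exact mul_div_cancel_left₀ _ hne
  exact hfin

theorem emap_continuous {X : Type u} [TopologicalSpace X] (t : ℝ) :
    Continuous (fun q : (HMIdx X → ℝ) × (HMIdx X → ℝ) => emap q.1 q.2 t) := by
  apply continuous_pi
  intro p
  unfold emap
  by_cases hb : p.2.1.2 ≤ t
  · simp only [dif_pos hb]
    exact (continuous_apply p).comp continuous_fst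
  simp only [dif_neg hb]
  by_cases ha : t ≤ p.2.1.1
  · simp only [dif_pos ha]
    exact (continuous_apply p).comp continuous_snd
  simp only [dif_neg ha]
  apply Continuous.div_const
  exact (continuous_const.mul (((continuous_apply _)).comp continuous_fst)).add
    (continuous_const.mul (((continuous_apply _)).comp continuous_snd))

theorem emap_hmEmbed {X : Type u} [TopologicalSpace X] {α β : ℝ → X}
    (hα : IsStepFun α) (hβ : IsStepFun β) {t : ℝ} (ht0 : 0 < t) (ht1 : t < 1) :
    emap (hmEmbed α) (hmEmbed β) t = hmEmbed (fun s => if s < t then α s else β s) := by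
  have hglue : IsStepFun (fun s => if s < t then α s else β s) := isStepFun_glue hα hβ ht0 ht1
  funext p
  obtain ⟨φ, ⟨⟨a, b⟩, ha, hab, hb⟩⟩ := p
  unfold emap
  by_cases h1 : b ≤ t
  · rw [dif_pos h1]
    show (b - a)⁻¹ * ∫ s in a..b, φ (α s) =
      (b - a)⁻¹ * ∫ s in a..b, φ (if s < t then α s else β s)
    congr 1
    refine integral_congr_ae2 (p := t) (q := t) (fun s hs hst _ => ?_)
    rw [Set.uIoc_of_le hab.le] at hs
    have : s < t := lt_of_le_of_ne (hs.2.trans h1) hst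
    rw [if_pos this]
  rw [dif_neg h1]
  by_cases h2 : t ≤ a
  · rw [dif_pos h2]
    show (b - a)⁻¹ * ∫ s in a..b, φ (β s) =
      (b - a)⁻¹ * ∫ s in a..b, φ (if s < t then α s else β s)
    congr 1
    refine integral_congr_ae2 (p := t) (q := t) (fun s hs _ _ => ?_)
    rw [Set.uIoc_of_le hab.le] at hs
    rw [if_neg (not_lt.mpr (h2.trans hs.1.le))]
  rw [dif_neg h2]
  have hat : a < t := lt_of_not_ge h2
  have htb : t < b := lt_of_not_ge h1
  have hIab : a ∈ Icc (0:ℝ) 1 := ⟨ha, hab.le.trans hb⟩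
  have hIt : t ∈ Icc (0:ℝ) 1 := ⟨ha.trans hat.le, htb.le.trans hb⟩
  have hIb : b ∈ Icc (0:ℝ) 1 := ⟨ha.trans hab.le, hb⟩
  have hadd : (∫ s in a..t, φ ((fun s => if s < t then α s else β s) s)) +
      (∫ s in t..b, φ ((fun s => if s < t then α s else β s) s)) =
      ∫ s in a..b, φ ((fun s => if s < t then α s else β s) s) :=
    integral_add_adjacent_intervals (step_intervalIntegrable hglue φ hIab hIt)
      (step_intervalIntegrable hglue φ hIt hIb)
  have e1 : (∫ s in a..t, φ ((fun s => if s < t then α s else β s) s)) =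
      ∫ s in a..t, φ (α s) := by
    refine integral_congr_ae2 (p := t) (q := t) (fun s hs hst _ => ?_)
    rw [Set.uIoc_of_le hat.le] at hs
    simp only
    rw [if_pos (lt_of_le_of_ne hs.2 hst)]
  have e2 : (∫ s in t..b, φ ((fun s => if s < t then α s else β s) s)) =
      ∫ s in t..b, φ (β s) := by
    refine integral_congr_ae2 (p := t) (q := t) (fun s hs _ _ => ?_)
    rw [Set.uIoc_of_le htb.le] at hs
    simp only
    rw [if_neg (not_lt.mpr hs.1.le)]
  show ((t - a) * ((t - a)⁻¹ * ∫ s in a..t, φ (α s)) +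
      (b - t) * ((b - t)⁻¹ * ∫ s in t..b, φ (β s))) / (b - a) =
      (b - a)⁻¹ * ∫ s in a..b, φ ((fun s => if s < t then α s else β s) s)
  rw [mul_inv_cancel_left₀ (sub_ne_zero.mpr hat.ne'),
    mul_inv_cancel_left₀ (sub_ne_zero.mpr htb.ne'), ← hadd, e1, e2,
    div_eq_inv_mul]


theorem step_mul_intervalIntegrable {X : Type u} {α : ℝ → X} (h : IsStepFun α) (F : X → ℝ)
    {a b : ℝ} (ha : a ∈ Icc (0:ℝ) 1) (hb : b ∈ Icc (0:ℝ) 1) (c : ℝ) (n : ℕ) :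
    IntervalIntegrable (fun s => fracInd c ((n:ℝ)*s) * F (α s)) volume a b := by
  have hmeas : AEStronglyMeasurable (fun s => fracInd c ((n:ℝ)*s)) volume :=
    ((fracInd_measurable c).comp (measurable_const_mul _)).aestronglyMeasurable
  have hbd : ∀ s : ℝ, ‖fracInd c ((n:ℝ)*s)‖ ≤ 1 := fun s => by
    rw [Real.norm_eq_abs]; exact abs_fracInd_le c _
  obtain ⟨hi1, hi2⟩ := step_intervalIntegrable h F ha hb
  exact ⟨hi1.bdd_mul hmeas.restrict (ae_of_all _ hbd), hi2.bdd_mul hmeas.restrict (ae_of_all _ hbd)⟩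

theorem approx_mem {X : Type u} [TopologicalSpace X] {α β : ℝ → X}
    (hα : IsStepFun α) (hβ : IsStepFun β) {c : ℝ} (hc : c ∈ Icc (0:ℝ) 1) :
    c • hmEmbed α + (1 - c) • hmEmbed β ∈ HSet X := by
  set γ : ℕ → ℝ → X := fun n s => if Int.fract ((n:ℝ)*s) < c then α s else β s with hγ
  refine mem_closure_of_tendsto (f := fun n : ℕ => hmEmbed (γ n)) (b := atTop) ?_ ?_
  · rw [tendsto_pi_nhds]
    intro p
    obtain ⟨φ, ⟨⟨a, b⟩, ha, hab, hb⟩⟩ := p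
    have hIa : a ∈ Icc (0:ℝ) 1 := ⟨ha, hab.le.trans hb⟩
    have hIb : b ∈ Icc (0:ℝ) 1 := ⟨ha.trans hab.le, hb⟩
    have hpt : ∀ (n : ℕ) (s : ℝ), φ (γ n s) =
        fracInd c ((n:ℝ)*s) * φ (α s) + (φ (β s) - fracInd c ((n:ℝ)*s) * φ (β s)) := by
      intro n s
      by_cases hf : Int.fract ((n:ℝ)*s) < c
      · simp [hγ, fracInd, hf]
      · simp [hγ, fracInd, hf]
    have hA : ∀ n : ℕ, IntervalIntegrable (fun s => fracInd c ((n:ℝ)*s) * φ (α s)) volume a b :=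
      fun n => step_mul_intervalIntegrable hα φ hIa hIb c n
    have hC : ∀ n : ℕ, IntervalIntegrable (fun s => fracInd c ((n:ℝ)*s) * φ (β s)) volume a b :=
      fun n => step_mul_intervalIntegrable hβ φ hIa hIb c n
    have hB : IntervalIntegrable (fun s => φ (β s)) volume a b :=
      step_intervalIntegrable hβ φ hIa hIb
    have hkey : ∀ n : ℕ, (∫ s in a..b, φ (γ n s)) =
        (∫ s in a..b, fracInd c ((n:ℝ)*s) * φ (α s)) +
          ((∫ s in a..b, φ (β s)) - ∫ s in a..b, fracInd c ((n:ℝ)*s) * φ (β s)) := by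
      intro n
      rw [intervalIntegral.integral_congr (fun s _ => hpt n s)]
      rw [intervalIntegral.integral_add (hA n) (hB.sub (hC n)),
        intervalIntegral.integral_sub hB (hC n)]
    have ht : Tendsto (fun n : ℕ => ∫ s in a..b, φ (γ n s)) atTop
        (𝓝 ((c * ∫ s in a..b, φ (α s)) +
          ((∫ s in a..b, φ (β s)) - c * ∫ s in a..b, φ (β s)))) := by
      refine Tendsto.congr (fun n => (hkey n).symm) ?_
      exact (step_tendsto hα φ hab.le hIa hIb hc).add
        (tendsto_const_nhds.sub (step_tendsto hβ φ hab.le hIa hIb hc))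
    have hfinal := ht.const_mul ((b - a)⁻¹)
    have hshow : ∀ n : ℕ, hmEmbed (γ n) ⟨φ, ⟨(a, b), ha, hab, hb⟩⟩ =
        (b - a)⁻¹ * ∫ s in a..b, φ (γ n s) := fun n => rfl
    have hfinal2 : Tendsto (fun n : ℕ => hmEmbed (γ n) ⟨φ, ⟨(a, b), ha, hab, hb⟩⟩) atTop
        (𝓝 ((b - a)⁻¹ * ((c * ∫ s in a..b, φ (α s)) +
          ((∫ s in a..b, φ (β s)) - c * ∫ s in a..b, φ (β s))))) :=
      hfinal.congr (fun n => (hshow n).symm)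
    convert hfinal2 using 2
    show c * ((b - a)⁻¹ * ∫ s in a..b, φ (α s)) +
      (1 - c) * ((b - a)⁻¹ * ∫ s in a..b, φ (β s)) = _
    ring
  · filter_upwards [eventually_ge_atTop 1] with n hn
    exact ⟨γ n, isStepFun_fracGlue hα hβ hc.1 hc.2 hn, rfl⟩

theorem hset_combo {X : Type u} [TopologicalSpace X] {μ β : HMIdx X → ℝ}
    (hμ : μ ∈ HSet X) (hβ : β ∈ HSet X) {c d : ℝ} (hc : 0 ≤ c) (hd : 0 ≤ d)
    (hcd : c + d = 1) : c • μ + d • β ∈ HSet X := by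
  have hd1 : d = 1 - c := by linarith
  subst hd1
  have hL : Continuous (fun q : (HMIdx X → ℝ) × (HMIdx X → ℝ) => c • q.1 + (1-c) • q.2) :=
    (continuous_fst.const_smul c).add (continuous_snd.const_smul (1-c))
  set S : Set (HMIdx X → ℝ) := hmEmbed '' {α : ℝ → X | IsStepFun α} with hSdef
  have hsub : (fun q : (HMIdx X → ℝ) × (HMIdx X → ℝ) => c • q.1 + (1-c) • q.2) '' (S ×ˢ S) ⊆
      HSet X := by
    rintro _ ⟨⟨x, y⟩, ⟨⟨γ₁, h₁, rfl⟩, ⟨γ₂, h₂, rfl⟩⟩, rfl⟩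
    exact approx_mem h₁ h₂ ⟨hc, by linarith⟩
  have hmem : (μ, β) ∈ closure (S ×ˢ S) := by
    rw [closure_prod_eq]
    exact ⟨hμ, hβ⟩
  have h1 := image_closure_subset_closure_image hL (Set.mem_image_of_mem _ hmem)
  have h2 := closure_mono hsub h1
  have hcl : IsClosed (HSet X) := isClosed_closure
  rwa [hcl.closure_eq] at h2


theorem statement7 {X Y : Type u} [TopologicalSpace X] [CompactSpace X] [T2Space X] [Nonempty X] [TopologicalSpace Y] [CompactSpace Y] [T2Space Y] [Nonempty Y]
    (f : C(X, Y)) (hf : Function.Surjective f)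
    (ν : HMIdx Y → ℝ) (hν : ν ∈ HSet Y) :
    HConvexSet {μ : HMIdx X → ℝ | μ ∈ HSet X ∧ Hmap f μ = ν} := by
  constructor
  · -- e-convexity
    intro μ hμ β hβ t ht
    rcases eq_or_lt_of_le ht.1 with h0 | h0
    · rw [← h0, emap_zero]; exact hβ
    rcases eq_or_lt_of_le ht.2 with h1 | h1
    · rw [h1, emap_one]; exact hμ
    refine ⟨?_, ?_⟩
    · set S : Set (HMIdx X → ℝ) := hmEmbed '' {α : ℝ → X | IsStepFun α} with hSdef
      have hcont : Continuous (fun q : (HMIdx X → ℝ) × (HMIdx X → ℝ) => emap q.1 q.2 t) :=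
        emap_continuous t
      have hsub : (fun q : (HMIdx X → ℝ) × (HMIdx X → ℝ) => emap q.1 q.2 t) '' (S ×ˢ S) ⊆ S := by
        rintro _ ⟨⟨x, y⟩, ⟨⟨γ₁, hg1, rfl⟩, ⟨γ₂, hg2, rfl⟩⟩, rfl⟩
        exact ⟨_, isStepFun_glue hg1 hg2 h0 h1, (emap_hmEmbed hg1 hg2 h0 h1).symm⟩
      have hmem : (μ, β) ∈ closure (S ×ˢ S) := by
        rw [closure_prod_eq]
        exact ⟨hμ.1, hβ.1⟩
      have hin := image_closure_subset_closure_image hcont (Set.mem_image_of_mem _ hmem)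
      exact closure_mono hsub hin
    · have hcomm : Hmap f (emap μ β t) = emap (Hmap f μ) (Hmap f β) t := rfl
      rw [hcomm, hμ.2, hβ.2, emap_self hν t]
  · -- convexity
    intro μ hμ β hβ c d hc hd hcd
    refine ⟨hset_combo hμ.1 hβ.1 hc hd hcd, ?_⟩
    funext p
    have e1 : μ ⟨p.1.comp f, p.2⟩ = ν p := congrFun hμ.2 p
    have e2 : β ⟨p.1.comp f, p.2⟩ = ν p := congrFun hβ.2 p
    show c * μ ⟨p.1.comp f, p.2⟩ + d * β ⟨p.1.comp f, p.2⟩ = ν p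
    rw [e1, e2, ← add_mul, hcd, one_mul]

end
end

section
/- Let f : X → Y be an open continuous surjection of nonempty compact Hausdorff spaces. Then Hf : HX → HY has a degenerate (singleton) fiber if and only if f has a degenerate (singleton) fiber. -/
open Set MeasureTheory Topology Filter

noncomputable section

universe u

theorem stepfun_exists_interval {n : ℕ} {t : Fin (n + 1) → ℝ} (h0 : t 0 = 0)
    (h1 : t (Fin.last n) = 1) (hm : StrictMono t) {s : ℝ} (hs : s ∈ Set.Ico (0:ℝ) 1) :
    ∃ i : Fin n, s ∈ Set.Ico (t i.castSucc) (t i.succ) := by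
  -- largest index with t i ≤ s
  have hne : ({i : Fin (n+1) | t i ≤ s} : Set _).toFinset.Nonempty := by
    refine ⟨0, ?_⟩
    simp [h0, hs.1]
  set A := ({i : Fin (n+1) | t i ≤ s} : Set _).toFinset
  obtain ⟨i, hiA, hmax⟩ := A.exists_max_image id hne
  have hiA' : t i ≤ s := by simpa [A] using hiA
  have hine : i ≠ Fin.last n := by
    intro h; rw [h, h1] at hiA'; exact absurd hiA' (not_le.2 hs.2)
  obtain ⟨j, rfl⟩ := Fin.exists_castSucc_eq.2 hine
  refine ⟨j, hiA', ?_⟩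
  by_contra hle
  have : j.succ ∈ A := by simpa [A] using not_lt.1 hle
  have := hmax _ this
  simp only [id] at this
  exact absurd (Fin.castSucc_lt_succ (i := j)) (not_lt.2 this)

/-- piecewise-constant representative of `h ∘ α` -/
theorem stepfun_comp_eqOn {X : Type u} {α : ℝ → X} {n : ℕ} {t : Fin (n + 1) → ℝ}
    (h0 : t 0 = 0) (h1 : t (Fin.last n) = 1) (hm : StrictMono t)
    (hstep : ∀ i : Fin n, ∀ s ∈ Set.Ico (t i.castSucc) (t i.succ), α s = α (t i.castSucc))
    (h : X → ℝ) :
    Set.EqOn (fun s => h (α s))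
      (fun s => ∑ i : Fin n, Set.indicator (Set.Ico (t i.castSucc) (t i.succ))
        (fun _ => h (α (t i.castSucc))) s) (Set.Ico (0:ℝ) 1) := by
  intro s hs
  obtain ⟨i, hi⟩ := stepfun_exists_interval h0 h1 hm hs
  have hval : h (α s) = h (α (t i.castSucc)) := congrArg h (hstep i s hi)
  simp only
  rw [Finset.sum_eq_single i]
  · rw [Set.indicator_of_mem hi, hval]
  · intro j _ hj
    apply Set.indicator_of_notMem
    rintro ⟨hj1, hj2⟩
    rcases lt_or_gt_of_ne hj with hlt | hlt
    · have : t j.succ ≤ t i.castSucc := hm.monotone (by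
        simpa [Fin.le_castSucc_iff] using (Fin.castSucc_lt_castSucc_iff.2 hlt))
      exact absurd (lt_of_lt_of_le hj2 (this.trans hi.1)) (lt_irrefl s)
    · have : t i.succ ≤ t j.castSucc := hm.monotone (by
        simpa [Fin.succ_le_castSucc_iff] using hlt)
      exact absurd (lt_of_lt_of_le hi.2 (this.trans hj1)) (lt_irrefl s)
  · intro hni; exact absurd (Finset.mem_univ i) hni

theorem stepfun_intervalIntegrable {X : Type u} {α : ℝ → X} (hα : IsStepFun α)
    (h : X → ℝ) {a b : ℝ} (ha : 0 ≤ a) (hb : b ≤ 1) (hab : a ≤ b) :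
    IntervalIntegrable (fun s => h (α s)) volume a b := by
  obtain ⟨n, t, h0, h1, hm, hstep⟩ := hα
  set F := (fun s => ∑ i : Fin n, Set.indicator (Set.Ico (t i.castSucc) (t i.succ))
        (fun _ => h (α (t i.castSucc))) s) with hF
  have hFi : IntervalIntegrable F volume a b := by
    apply MeasureTheory.Integrable.intervalIntegrable
    apply MeasureTheory.integrable_finset_sum
    intro i _
    rw [MeasureTheory.integrable_indicator_iff measurableSet_Ico]
    exact integrableOn_const measure_Ico_lt_top.ne
  refine hFi.congr_ae (Filter.EventuallyEq.symm ?_)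
  have heq := stepfun_comp_eqOn h0 h1 hm hstep h
  have hmem : ∀ᵐ s ∂(volume.restrict (Set.uIoc a b)), s ∈ Set.uIoc a b :=
    MeasureTheory.ae_restrict_mem measurableSet_uIoc
  have hne1 : ∀ᵐ s ∂(volume.restrict (Set.uIoc a b)), s ≠ (1:ℝ) := by
    apply MeasureTheory.ae_restrict_of_ae
    simpa using MeasureTheory.ae_iff.2 (by simpa using Real.volume_singleton (x := (1:ℝ)))
  filter_upwards [hmem, hne1] with s hs hs1
  apply heq
  rw [Set.uIoc_of_le hab] at hs
  exact ⟨ha.trans hs.1.le, lt_of_le_of_ne (hs.2.trans hb) hs1⟩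

theorem stepfun_integral_mono {Y : Type u} {β : ℝ → Y} (hβ : IsStepFun β)
    (h₁ h₂ : Y → ℝ) (hle : ∀ y, h₁ y ≤ h₂ y) {a b : ℝ} (ha : 0 ≤ a) (hb : b ≤ 1)
    (hab : a ≤ b) :
    ∫ s in a..b, h₁ (β s) ≤ ∫ s in a..b, h₂ (β s) :=
  intervalIntegral.integral_mono_on hab (stepfun_intervalIntegrable hβ h₁ ha hb hab)
    (stepfun_intervalIntegrable hβ h₂ ha hb hab) (fun s _ => hle (β s))

theorem hmEmbed_mem_Icc {X : Type u} [TopologicalSpace X] [CompactSpace X]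
    {α : ℝ → X} (hα : IsStepFun α) (p : HMIdx X) :
    hmEmbed α p ∈ Set.Icc (-‖p.1‖) ‖p.1‖ := by
  obtain ⟨φ, ⟨⟨a, b⟩, ha, hab, hb⟩⟩ := p
  have hbound : |∫ s in a..b, φ (α s)| ≤ ‖φ‖ * |b - a| :=
    intervalIntegral.norm_integral_le_of_norm_le_const
      (fun s _ => φ.norm_coe_le_norm (α s))
  rw [abs_of_nonneg (by linarith : (0:ℝ) ≤ b - a)] at hbound
  have hban : (0:ℝ) < b - a := by linarith
  rw [Set.mem_Icc, ← abs_le]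
  show |(b - a)⁻¹ * ∫ s in a..b, φ (α s)| ≤ ‖φ‖
  rw [abs_mul, abs_of_nonneg (inv_nonneg.2 hban.le)]
  calc (b-a)⁻¹ * |∫ s in a..b, φ (α s)| ≤ (b-a)⁻¹ * (‖φ‖ * (b-a)) := by
        exact mul_le_mul_of_nonneg_left hbound (inv_nonneg.2 hban.le)
    _ = ‖φ‖ := by field_simp

theorem HSet_coord_ineq {X : Type u} [TopologicalSpace X] {w : HMIdx X → ℝ}
    (hw : w ∈ HSet X) (ψ φ' : C(X, ℝ)) {a b : ℝ} (ha : 0 ≤ a) (hab : a < b) (hb : b ≤ 1)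
    (c₁ c₂ d : ℝ) (hpt : ∀ ξ : X, c₁ * ψ ξ + c₂ * φ' ξ ≤ d) :
    c₁ * w ⟨ψ, ⟨(a, b), ha, hab, hb⟩⟩ + c₂ * w ⟨φ', ⟨(a, b), ha, hab, hb⟩⟩ ≤ d := by
  set C : Set (HMIdx X → ℝ) :=
    {v | c₁ * v ⟨ψ, ⟨(a,b), ha, hab, hb⟩⟩ + c₂ * v ⟨φ', ⟨(a,b), ha, hab, hb⟩⟩ ≤ d} with hC
  have hclosed : IsClosed C := by
    apply isClosed_le _ continuous_const
    exact (continuous_const.mul (continuous_apply _)).add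
      (continuous_const.mul (continuous_apply _))
  have hsub : hmEmbed '' {α : ℝ → X | IsStepFun α} ⊆ C := by
    rintro _ ⟨α, hα, rfl⟩
    have hban : (0:ℝ) < b - a := by linarith
    show c₁ * ((b - a)⁻¹ * ∫ s in a..b, ψ (α s)) +
      c₂ * ((b - a)⁻¹ * ∫ s in a..b, φ' (α s)) ≤ d
    have hint1 : IntervalIntegrable (fun s => c₁ * ψ (α s)) volume a b :=
      stepfun_intervalIntegrable hα (fun ξ => c₁ * ψ ξ) ha hb hab.le
    have hint2 : IntervalIntegrable (fun s => c₂ * φ' (α s)) volume a b :=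
      stepfun_intervalIntegrable hα (fun ξ => c₂ * φ' ξ) ha hb hab.le
    have hcomb : ∫ s in a..b, (c₁ * ψ (α s) + c₂ * φ' (α s)) ≤ d * (b - a) := by
      have := stepfun_integral_mono hα (fun ξ => c₁ * ψ ξ + c₂ * φ' ξ) (fun _ => d)
        (fun ξ => hpt ξ) ha hb hab.le
      simpa [intervalIntegral.integral_const, smul_eq_mul, mul_comm] using this
    rw [intervalIntegral.integral_add hint1 hint2,
      intervalIntegral.integral_const_mul, intervalIntegral.integral_const_mul] at hcomb
    calc c₁ * ((b - a)⁻¹ * ∫ s in a..b, ψ (α s)) +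
        c₂ * ((b - a)⁻¹ * ∫ s in a..b, φ' (α s))
        = (b - a)⁻¹ * ((c₁ * ∫ s in a..b, ψ (α s)) + c₂ * ∫ s in a..b, φ' (α s)) := by ring
      _ ≤ (b - a)⁻¹ * (d * (b - a)) :=
          mul_le_mul_of_nonneg_left hcomb (inv_nonneg.2 hban.le)
      _ = d := by field_simp
  exact closure_minimal hsub hclosed hw

theorem HSet_coord_neg {X : Type u} [TopologicalSpace X] {w : HMIdx X → ℝ}
    (hw : w ∈ HSet X) (ψ : C(X, ℝ)) (ab : {p : ℝ × ℝ // 0 ≤ p.1 ∧ p.1 < p.2 ∧ p.2 ≤ 1}) :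
    w ⟨-ψ, ab⟩ = -(w ⟨ψ, ab⟩) := by
  have hclosed : IsClosed {v : HMIdx X → ℝ | v ⟨-ψ, ab⟩ = -(v ⟨ψ, ab⟩)} :=
    isClosed_eq (continuous_apply _) (continuous_apply _).neg
  have hsub : hmEmbed '' {α : ℝ → X | IsStepFun α} ⊆
      {v : HMIdx X → ℝ | v ⟨-ψ, ab⟩ = -(v ⟨ψ, ab⟩)} := by
    rintro _ ⟨α, hα, rfl⟩
    show (ab.1.2 - ab.1.1)⁻¹ * ∫ s in ab.1.1..ab.1.2, (-ψ) (α s) =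
      -((ab.1.2 - ab.1.1)⁻¹ * ∫ s in ab.1.1..ab.1.2, ψ (α s))
    rw [show (fun s => (-ψ) (α s)) = (fun s => -(ψ (α s))) from rfl,
      intervalIntegral.integral_neg]
    ring
  exact closure_minimal hsub hclosed hw

theorem Hmap_deltaH {X Y : Type u} [TopologicalSpace X] [TopologicalSpace Y]
    (f : C(X, Y)) (x : X) : Hmap f (deltaH x) = deltaH (f x) := rfl

theorem unique_fiber_left {X Y : Type u} [TopologicalSpace X] [CompactSpace X] [T2Space X]
    [Nonempty X] [TopologicalSpace Y] [CompactSpace Y] [T2Space Y]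
    (f : C(X, Y)) {x : X} {y : Y} (hxy : f x = y)
    (huniq : ∀ x', f x' = y → x' = x)
    {μ : HMIdx X → ℝ} (hμ : μ ∈ HSet X) (hfib : Hmap f μ = deltaH y) :
    μ = deltaH x := by
  funext p
  obtain ⟨ψ, ⟨⟨a, b⟩, ha, hab, hb⟩⟩ := p
  show μ ⟨ψ, ⟨(a, b), ha, hab, hb⟩⟩ = ψ x
  have key : ∀ ε > 0, ∀ χ : C(X, ℝ), (∀ ξ, ‖χ ξ‖ ≤ ‖ψ‖) →
      μ ⟨χ, ⟨(a, b), ha, hab, hb⟩⟩ ≤ χ x + ε := by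
    intro ε hε χ hχ
    set M : ℝ := ‖ψ‖ with hM
    have hM0 : 0 ≤ M := norm_nonneg _
    -- open set U around x
    set U : Set X := χ ⁻¹' (Set.Iio (χ x + ε)) with hU
    have hUopen : IsOpen U := (isOpen_Iio).preimage χ.continuous
    have hxU : x ∈ U := by simp [hU, hε]
    -- V
    set V : Set Y := (f '' Uᶜ)ᶜ with hV
    have hVopen : IsOpen V := by
      rw [hV]
      exact (f.continuous.isClosedMap _ hUopen.isClosed_compl).isOpen_compl
    have hyV : y ∈ V := by
      intro hyim
      obtain ⟨x', hx'U, hfx'⟩ := hyim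
      exact hx'U (huniq x' hfx' ▸ hxU)
    have hpre : f ⁻¹' V ⊆ U := by
      intro ξ hξ
      by_contra hne
      exact hξ ⟨ξ, hne, rfl⟩
    -- Urysohn
    obtain ⟨φ, hφ0, hφ1, hφrange⟩ := exists_continuous_zero_one_of_isClosed
      hVopen.isClosed_compl isClosed_singleton
      (Set.disjoint_left.2 fun z hz (hz' : z ∈ ({y} : Set Y)) => hz (hz' ▸ hyV))
    have hφy : φ y = 1 := hφ1 rfl
    -- pointwise estimate
    have hpt : ∀ ξ : X, 1 * χ ξ + (2 * M) * (φ.comp f) ξ ≤ (χ x + ε + 2 * M) := by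
      intro ξ
      simp only [one_mul, ContinuousMap.comp_apply]
      by_cases hξV : f ξ ∈ V
      · have hξU : ξ ∈ U := hpre hξV
        have h1 : χ ξ < χ x + ε := hξU
        have h2 : φ (f ξ) ≤ 1 := (hφrange _).2
        nlinarith
      · have h0 : φ (f ξ) = 0 := hφ0 hξV
        have hb1 : ‖χ ξ‖ ≤ M := hχ ξ
        have hb2 : ‖χ x‖ ≤ M := hχ x
        rw [Real.norm_eq_abs, abs_le] at hb1 hb2
        rw [h0]
        linarith [hb1.2, hb2.1]
    have hco := HSet_coord_ineq hμ χ (φ.comp f) ha hab hb 1 (2 * M)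
      (χ x + ε + 2 * M) hpt
    have hφcoord : μ ⟨φ.comp f, ⟨(a, b), ha, hab, hb⟩⟩ = 1 := by
      have := congrFun hfib ⟨φ, ⟨(a, b), ha, hab, hb⟩⟩
      simp only [Hmap, deltaH] at this
      rw [this, hφy]
    rw [hφcoord] at hco
    linarith
  have h1 : μ ⟨ψ, ⟨(a, b), ha, hab, hb⟩⟩ ≤ ψ x := by
    apply le_of_forall_pos_le_add
    intro ε hε
    exact key ε hε ψ (fun ξ => ψ.norm_coe_le_norm ξ)
  have h2 : -(μ ⟨ψ, ⟨(a, b), ha, hab, hb⟩⟩) ≤ -(ψ x) := by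
    rw [← HSet_coord_neg hμ ψ ⟨(a, b), ha, hab, hb⟩]
    have := fun ε hε => key ε hε (-ψ) (fun ξ => by
      simpa using ψ.norm_coe_le_norm ξ)
    have h' : ∀ ε > 0, μ ⟨-ψ, ⟨(a, b), ha, hab, hb⟩⟩ ≤ -(ψ x) + ε := by
      intro ε hε
      simpa using this ε hε
    exact le_of_forall_pos_le_add h'
  linarith

theorem IsStepFun.comp {X Y : Type u} {β : ℝ → Y} (hβ : IsStepFun β) (g : Y → X) :
    IsStepFun (fun s => g (β s)) := by
  obtain ⟨n, t, h0, h1, hm, hstep⟩ := hβ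
  exact ⟨n, t, h0, h1, hm, fun i s hs => congrArg g (hstep i s hs)⟩

theorem Hmap_hmEmbed {X Y : Type u} [TopologicalSpace X] [TopologicalSpace Y]
    (f : C(X, Y)) (α : ℝ → X) : Hmap f (hmEmbed α) = hmEmbed (fun s => f (α s)) := rfl

theorem right_dir {X Y : Type u} [TopologicalSpace X] [CompactSpace X] [T2Space X]
    [Nonempty X] [TopologicalSpace Y] [CompactSpace Y] [T2Space Y] [Nonempty Y]
    (f : C(X, Y)) (hopen : IsOpenMap (⇑f))
    (h2 : ∀ y : Y, ∃ x₁ x₂ : X, f x₁ = y ∧ f x₂ = y ∧ x₁ ≠ x₂)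
    {ν : HMIdx Y → ℝ} (hν : ν ∈ HSet Y) :
    ∃ μ₁ μ₂ : HMIdx X → ℝ, μ₁ ∈ HSet X ∧ μ₂ ∈ HSet X ∧
      Hmap f μ₁ = ν ∧ Hmap f μ₂ = ν ∧ μ₁ ≠ μ₂ := by
  classical
  -- pairs of points in fibers and separating functions
  choose x₁ x₂ hfx₁ hfx₂ hxne using h2
  have hury : ∀ y : Y, ∃ g : C(X, ℝ), g (x₁ y) = 0 ∧ g (x₂ y) = 1 ∧
      ∀ ξ, g ξ ∈ Set.Icc (0:ℝ) 1 := by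
    intro y
    obtain ⟨g, hg0, hg1, hgr⟩ := exists_continuous_zero_one_of_isClosed
      (isClosed_singleton (x := x₁ y)) (isClosed_singleton (x := x₂ y))
      (by simp [Set.disjoint_singleton, hxne y])
    exact ⟨g, hg0 rfl, hg1 rfl, hgr⟩
  choose g hg1 hg2 hgr using hury
  -- the open cover
  set W : Y → Set Y := fun y =>
    f '' (g y ⁻¹' Set.Iio (1/4)) ∩ f '' (g y ⁻¹' Set.Ioi (3/4)) with hW
  have hWopen : ∀ y, IsOpen (W y) := fun y =>
    (hopen _ ((isOpen_Iio).preimage (g y).continuous)).inter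
      (hopen _ ((isOpen_Ioi).preimage (g y).continuous))
  have hyW : ∀ y, y ∈ W y := fun y =>
    ⟨⟨x₁ y, by simp [hg1 y], hfx₁ y⟩, ⟨x₂ y, by simp [hg2 y]; norm_num, hfx₂ y⟩⟩
  obtain ⟨σ, hσcover⟩ := isCompact_univ.elim_finite_subcover W hWopen
    (fun y _ => Set.mem_iUnion.2 ⟨y, hyW y⟩)
  have hσne : σ.Nonempty := by
    obtain ⟨y0⟩ := ‹Nonempty Y›
    obtain ⟨j, hj⟩ := Set.mem_iUnion₂.1 (hσcover (Set.mem_univ y0))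
    exact ⟨j, hj.1⟩
  have hcard : (0:ℝ) < σ.card := by exact_mod_cast Finset.card_pos.2 hσne
  -- selections
  have hsel' : ∀ y', ∃ j, j ∈ σ ∧ y' ∈ W j := by
    intro y'
    obtain ⟨j, hj⟩ := Set.mem_iUnion₂.1 (hσcover (Set.mem_univ y'))
    exact ⟨j, hj.1, hj.2⟩
  choose sel hselσ hselW using hsel'
  choose c₁ hc₁U hc₁f using fun y' => (hselW y').1
  choose c₂ hc₂U hc₂f using fun y' => (hselW y').2
  set h : Y → Y → ℝ := fun j y' => if sel y' = j then 1 else 0 with hh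
  -- the fraction of time spent with selection j is I j β
  set I : Y → (ℝ → Y) → ℝ := fun j β => ∫ s in (0:ℝ)..1, h j (β s) with hI
  have hIint : ∀ (j : Y) (β : ℝ → Y), IsStepFun β →
      IntervalIntegrable (fun s => h j (β s)) MeasureTheory.volume 0 1 :=
    fun j β hβ => stepfun_intervalIntegrable hβ (h j) le_rfl le_rfl zero_le_one
  have hIsum : ∀ β : ℝ → Y, IsStepFun β → ∑ j ∈ σ, I j β = 1 := by
    intro β hβ
    rw [hI]
    simp only
    rw [← intervalIntegral.integral_finset_sum (fun j _ => hIint j β hβ)]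
    have : ∀ s : ℝ, ∑ j ∈ σ, h j (β s) = 1 := by
      intro s
      rw [hh]
      simp only
      rw [Finset.sum_ite_eq σ (sel (β s)) (fun _ => (1:ℝ))]
      exact if_pos (hselσ (β s))
    simp only [this]
    simp
  have hJex : ∀ β : {β : ℝ → Y // IsStepFun β}, ∃ j, j ∈ σ ∧ 1/(σ.card:ℝ) ≤ I j β.val := by
    intro ⟨β, hβ⟩
    by_contra hcon
    push_neg at hcon
    have hlt : ∑ j ∈ σ, I j β < ∑ j ∈ σ, 1/(σ.card:ℝ) :=
      Finset.sum_lt_sum_of_nonempty hσne (fun j hj => hcon j (hj))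
    rw [hIsum β hβ] at hlt
    rw [Finset.sum_const] at hlt
    have : (σ.card:ℝ) * (1/(σ.card:ℝ)) = 1 := by field_simp
    rw [nsmul_eq_mul, this] at hlt
    exact lt_irrefl 1 hlt
  choose J hJσ hJI using hJex
  -- lifts of step functions
  set q0 : {p : ℝ × ℝ // 0 ≤ p.1 ∧ p.1 < p.2 ∧ p.2 ≤ 1} :=
    ⟨((0:ℝ), (1:ℝ)), le_rfl, zero_lt_one, le_rfl⟩ with hq0
  set lift₁ : {β : ℝ → Y // IsStepFun β} → ℝ → X :=
    fun β s => c₁ (β.val s) with hlift₁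
  set lift₂ : {β : ℝ → Y // IsStepFun β} → ℝ → X :=
    fun β s => if sel (β.val s) = J β then c₂ (β.val s) else c₁ (β.val s) with hlift₂
  have hlift₁step : ∀ β, IsStepFun (lift₁ β) := fun β => β.2.comp _
  have hlift₂step : ∀ β, IsStepFun (lift₂ β) := fun β =>
    (β.2.comp (fun y' => if sel y' = J β then c₂ y' else c₁ y') : _)
  have hflift₁ : ∀ β s, f (lift₁ β s) = β.val s := fun β s => hc₁f _
  have hflift₂ : ∀ β s, f (lift₂ β s) = β.val s := by
    intro β s
    rw [hlift₂]
    simp only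
    split
    · exact hc₂f _
    · exact hc₁f _
  -- key separation estimate
  have hkey : ∀ β : {β : ℝ → Y // IsStepFun β},
      hmEmbed (lift₁ β) ⟨g (J β), q0⟩ + 1/(2*(σ.card:ℝ))
        ≤ hmEmbed (lift₂ β) ⟨g (J β), q0⟩ := by
    intro β
    set G₁ : Y → ℝ := fun y' => g (J β) (c₁ y') with hG₁
    set G₂ : Y → ℝ := fun y' =>
      g (J β) (if sel y' = J β then c₂ y' else c₁ y') with hG₂
    have hpt : ∀ y', G₁ y' + (1/2) * h (J β) y' ≤ G₂ y' := by
      intro y'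
      rw [hG₁, hG₂, hh]
      simp only
      by_cases hs : sel y' = J β
      · rw [if_pos hs, if_pos hs]
        have hu2 : (3:ℝ)/4 < g (sel y') (c₂ y') := hc₂U y'
        have hu1 : g (sel y') (c₁ y') < 1/4 := hc₁U y'
        rw [hs] at hu2 hu1
        linarith
      · rw [if_neg hs, if_neg hs]
        simp
    have hint1 : IntervalIntegrable (fun s => G₁ (β.val s)) MeasureTheory.volume 0 1 :=
      stepfun_intervalIntegrable β.2 G₁ le_rfl le_rfl zero_le_one
    have hinth : IntervalIntegrable (fun s => (1/2 : ℝ) * h (J β) (β.val s))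
        MeasureTheory.volume 0 1 :=
      stepfun_intervalIntegrable β.2 (fun y' => (1/2 : ℝ) * h (J β) y') le_rfl le_rfl zero_le_one
    have hmono : ∫ s in (0:ℝ)..1, (G₁ (β.val s) + (1/2) * h (J β) (β.val s)) ≤
        ∫ s in (0:ℝ)..1, G₂ (β.val s) :=
      stepfun_integral_mono β.2 (fun y' => G₁ y' + (1/2) * h (J β) y') G₂ hpt
        le_rfl le_rfl zero_le_one
    rw [intervalIntegral.integral_add hint1 hinth,
      intervalIntegral.integral_const_mul] at hmono
    have hIlb : 1/(σ.card:ℝ) ≤ I (J β) β.val := hJI β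
    have hIval : ∫ s in (0:ℝ)..1, h (J β) (β.val s) = I (J β) β.val := rfl
    rw [hIval] at hmono
    show (1 - 0 : ℝ)⁻¹ * (∫ s in (0:ℝ)..1, g (J β) (lift₁ β s)) + 1/(2*(σ.card:ℝ)) ≤
      (1 - 0 : ℝ)⁻¹ * ∫ s in (0:ℝ)..1, g (J β) (lift₂ β s)
    have e1 : (fun s => g (J β) (lift₁ β s)) = fun s => G₁ (β.val s) := rfl
    have e2 : (fun s => g (J β) (lift₂ β s)) = fun s => G₂ (β.val s) := rfl
    rw [e1, e2]
    have hhalf : (1:ℝ)/(2*(σ.card:ℝ)) ≤ 1/2 * I (J β) β.val := by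
      have hr : (1:ℝ)/(2*(σ.card:ℝ)) = 1/2 * (1/(σ.card:ℝ)) := by ring
      rw [hr]
      nlinarith [hIlb]
    have hone : ((1:ℝ) - 0)⁻¹ = 1 := by norm_num
    rw [hone, one_mul, one_mul]
    linarith [hhalf, hmono]
  -- choose representatives of points in the image
  have hpick : ∀ w : HMIdx Y → ℝ, ∃ β : {β : ℝ → Y // IsStepFun β},
      w ∈ hmEmbed '' {β : ℝ → Y | IsStepFun β} → hmEmbed β.val = w := by
    intro w
    by_cases hw : w ∈ hmEmbed '' {β : ℝ → Y | IsStepFun β}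
    · obtain ⟨β, hβ, hval⟩ := hw
      exact ⟨⟨β, hβ⟩, fun _ => hval⟩
    · exact ⟨⟨fun _ => Classical.arbitrary Y, isStepFun_const _⟩, fun hmem => absurd hmem hw⟩
  choose B hB using hpick
  obtain ⟨u, huS, hulim⟩ := mem_closure_iff_ultrafilter.1 hν
  set S : Set (HMIdx Y → ℝ) := hmEmbed '' {β : ℝ → Y | IsStepFun β} with hS
  have hUnion : (⋃ j ∈ (σ : Set Y), (S ∩ {w | J (B w) = j})) ∈ u := by
    refine Filter.mem_of_superset huS (fun w hw => ?_)
    exact Set.mem_iUnion₂.2 ⟨J (B w), hJσ (B w), hw, rfl⟩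
  obtain ⟨j₀, hj₀σ, hSj₀⟩ := (Ultrafilter.finite_biUnion_mem_iff σ.finite_toSet).1 hUnion
  -- common limit construction
  have main : ∀ L : {β : ℝ → Y // IsStepFun β} → ℝ → X,
      (∀ β, IsStepFun (L β)) → (∀ β s, f (L β s) = β.val s) →
      ∃ μ : HMIdx X → ℝ, μ ∈ HSet X ∧ Hmap f μ = ν ∧
        Filter.Tendsto (fun w => hmEmbed (L (B w))) ↑u (nhds μ) := by
    intro L hLstep hLf
    set Φ : (HMIdx Y → ℝ) → HMIdx X → ℝ := fun w => hmEmbed (L (B w)) with hΦ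
    set K : Set (HMIdx X → ℝ) := Set.univ.pi (fun p => Set.Icc (-‖p.1‖) ‖p.1‖) with hK
    have hKcomp : IsCompact K := isCompact_univ_pi (fun p => isCompact_Icc)
    have hKmem : K ∈ Ultrafilter.map Φ u := by
      refine Filter.mem_of_superset (Filter.mem_map.2 (Filter.mem_of_superset huS ?_)) le_rfl
      intro w hw
      exact Set.mem_univ_pi.2 (fun p => hmEmbed_mem_Icc (hLstep (B w)) p)
    obtain ⟨μ, hμK, hle⟩ := hKcomp.ultrafilter_le_nhds (Ultrafilter.map Φ u)
      (Filter.le_principal_iff.2 hKmem)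
    have hTend : Filter.Tendsto Φ ↑u (nhds μ) := by
      rw [Filter.Tendsto, ← Ultrafilter.coe_map]
      exact hle
    have hμH : μ ∈ HSet X := by
      refine mem_closure_iff_ultrafilter.2 ⟨Ultrafilter.map Φ u, ?_, hle⟩
      refine Filter.mem_map.2 (Filter.mem_of_superset huS ?_)
      intro w hw
      exact ⟨L (B w), hLstep (B w), rfl⟩
    have hcont : Continuous (Hmap (X := X) (Y := Y) f) :=
      continuous_pi fun p => continuous_apply _
    have h1 : Filter.Tendsto (fun w => Hmap f (Φ w)) ↑u (nhds (Hmap f μ)) :=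
      (hcont.tendsto μ).comp hTend
    have heq : ∀ w ∈ S, Hmap f (Φ w) = w := by
      intro w hw
      rw [hΦ]
      show Hmap f (hmEmbed (L (B w))) = w
      rw [Hmap_hmEmbed, show (fun s => f (L (B w) s)) = (B w).val from funext (hLf (B w)),
        hB w hw]
    have h2 : Filter.Tendsto (id : (HMIdx Y → ℝ) → _) ↑u (nhds (Hmap f μ)) :=
      h1.congr' (Filter.eventuallyEq_of_mem huS heq)
    have h3 : Filter.Tendsto (id : (HMIdx Y → ℝ) → _) ↑u (nhds ν) := by
      rw [Filter.tendsto_id']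
      exact hulim
    exact ⟨μ, hμH, tendsto_nhds_unique h2 h3, hTend⟩
  obtain ⟨μ₁, hμ₁H, hμ₁f, hT₁⟩ := main lift₁ hlift₁step hflift₁
  obtain ⟨μ₂, hμ₂H, hμ₂f, hT₂⟩ := main lift₂ hlift₂step hflift₂
  -- separation
  set q : HMIdx X := ⟨g j₀, q0⟩ with hq
  have htend : Filter.Tendsto
      (fun w => hmEmbed (lift₂ (B w)) q - hmEmbed (lift₁ (B w)) q) ↑u
      (nhds (μ₂ q - μ₁ q)) :=
    (((continuous_apply q).tendsto μ₂).comp hT₂).sub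
      (((continuous_apply q).tendsto μ₁).comp hT₁)
  have hev : ∀ᶠ w in (↑u : Filter (HMIdx Y → ℝ)),
      1/(2*(σ.card:ℝ)) ≤ hmEmbed (lift₂ (B w)) q - hmEmbed (lift₁ (B w)) q := by
    refine Filter.eventually_of_mem hSj₀ (fun w hw => ?_)
    have hk := hkey (B w)
    rw [hw.2] at hk
    linarith
  have hge : 1/(2*(σ.card:ℝ)) ≤ μ₂ q - μ₁ q := ge_of_tendsto htend hev
  have hpos : (0:ℝ) < 1/(2*(σ.card:ℝ)) := by positivity
  exact ⟨μ₁, μ₂, hμ₁H, hμ₂H, hμ₁f, hμ₂f, fun he => by rw [he] at hge; linarith⟩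

theorem statement8 {X Y : Type u} [TopologicalSpace X] [CompactSpace X] [T2Space X] [Nonempty X] [TopologicalSpace Y] [CompactSpace Y] [T2Space Y] [Nonempty Y]
    (f : C(X, Y)) (hf : Function.Surjective f) (hopen : IsOpenMap (⇑f)) :
    (∃ ν : ↥(HSet Y), ∃! μ : ↥(HSet X), HfSub f μ = ν) ↔ (∃ y : Y, ∃! x : X, f x = y) := by
  constructor
  · rintro ⟨ν, hex⟩
    by_contra hno
    push_neg at hno
    have h2 : ∀ y : Y, ∃ x₁ x₂ : X, f x₁ = y ∧ f x₂ = y ∧ x₁ ≠ x₂ := by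
      intro y
      obtain ⟨x, hx⟩ := hf y
      have := hno y
      rw [ExistsUnique] at this
      push_neg at this
      obtain ⟨z, hz, hzne⟩ := this x hx
      exact ⟨x, z, hx, hz, fun he => hzne (he ▸ rfl)⟩
    obtain ⟨μ₁, μ₂, hμ₁H, hμ₂H, hμ₁f, hμ₂f, hne⟩ := right_dir f hopen h2 ν.2
    have he1 : HfSub f ⟨μ₁, hμ₁H⟩ = ν := Subtype.ext hμ₁f
    have he2 : HfSub f ⟨μ₂, hμ₂H⟩ = ν := Subtype.ext hμ₂f
    have := (hex.unique he1 he2)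
    exact hne (congrArg Subtype.val this)
  · rintro ⟨y, x, hxy, huniq⟩
    refine ⟨⟨deltaH y, deltaH_mem y⟩, ⟨deltaH x, deltaH_mem x⟩, ?_, ?_⟩
    · exact Subtype.ext ((Hmap_deltaH f x).trans (congrArg deltaH hxy))
    · intro μ hμ
      exact Subtype.ext (unique_fiber_left f hxy huniq μ.2
        (Subtype.ext_iff.1 hμ : Hmap f μ.val = deltaH y))

end
end
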